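/- Let L/K be a field extension and let C be an additive K-category such that Hom_C(M,N) is finite-dimensional over K for all objects M, N. Then for all objects N, M of C: N is isomorphic to M in C if and only if N_L is isomorphic to M_L in the extended category C ⊗_K L. -/

import Mathlib

open CategoryTheory CategoryTheory.Limits

noncomputable section

universe w v u

namespace HermCat

variable {C : Type u} [Category.{v} C] [Preadditive C]

/-- A hermitian structure on an additive category `C`: a contravariant additive
functor `*` together with a natural transformation `ω : id → **` satisfying
`(ω_X)* ∘ ω_{X*} = id_{X*}`. -/
structure HermStructure (C : Type u) [Category.{v} C] [Preadditive C] where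
  star : C → C
  starMap : ∀ {X Y : C}, (X ⟶ Y) → (star Y ⟶ star X)
  starMap_id : ∀ X : C, starMap (𝟙 X) = 𝟙 (star X)
  starMap_comp : ∀ {X Y Z : C} (f : X ⟶ Y) (g : Y ⟶ Z),
    starMap (f ≫ g) = starMap g ≫ starMap f
  starMap_add : ∀ {X Y : C} (f g : X ⟶ Y), starMap (f + g) = starMap f + starMap g
  omega : ∀ X : C, X ⟶ star (star X)
  omega_natural : ∀ {X Y : C} (f : X ⟶ Y),
    f ≫ omega Y = omega X ≫ starMap (starMap f)
  omega_star : ∀ X : C, omega (star X) ≫ starMap (omega X) = 𝟙 (star X)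

namespace HermStructure

variable (H : HermStructure C)

/-- The additive-monoid-hom incarnation of `starMap`. -/
def starHom (X Y : C) : (X ⟶ Y) →+ (H.star Y ⟶ H.star X) :=
  AddMonoidHom.mk' H.starMap (fun f g => H.starMap_add f g)

theorem starMap_zero (X Y : C) : H.starMap (0 : X ⟶ Y) = 0 :=
  (H.starHom X Y).map_zero

theorem starMap_neg {X Y : C} (f : X ⟶ Y) : H.starMap (-f) = -H.starMap f :=
  (H.starHom X Y).map_neg f

theorem starMap_sub {X Y : C} (f g : X ⟶ Y) :
    H.starMap (f - g) = H.starMap f - H.starMap g :=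
  (H.starHom X Y).map_sub f g

theorem starMap_nsmul {X Y : C} (n : ℕ) (f : X ⟶ Y) :
    H.starMap (n • f) = n • H.starMap f :=
  (H.starHom X Y).map_nsmul n f

theorem starMap_zsmul {X Y : C} (n : ℤ) (f : X ⟶ Y) :
    H.starMap (n • f) = n • H.starMap f :=
  (H.starHom X Y).map_zsmul n f

/-- An object is reflexive if `ω_X` is an isomorphism. -/
def Reflexive (X : C) : Prop := IsIso (H.omega X)

/-- A sesquilinear form `s : M ⟶ M*` is unimodular if `s` and `s* ∘ ω_M` are
isomorphisms. -/
def IsUnimodular {M : C} (s : M ⟶ H.star M) : Prop :=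
  IsIso s ∧ IsIso (H.omega M ≫ H.starMap s)

/-- A sesquilinear form `s : M ⟶ M*` is `ε`-hermitian if `s = ε • (s* ∘ ω_M)`. -/
def IsEpsHermitian (ε : ℤ) {M : C} (s : M ⟶ H.star M) : Prop :=
  s = ε • (H.omega M ≫ H.starMap s)

/-- `f` is an isometry from `(M, s)` to `(M', s')` if it is an isomorphism with
`s = f* ∘ s' ∘ f`. -/
def IsIsometry {M M' : C} (s : M ⟶ H.star M) (s' : M' ⟶ H.star M')
    (f : M ⟶ M') : Prop :=
  IsIso f ∧ s = f ≫ s' ≫ H.starMap f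

/-- Two sesquilinear forms are isometric if there is an isometry between them. -/
def Isometric {M M' : C} (s : M ⟶ H.star M) (s' : M' ⟶ H.star M') : Prop :=
  ∃ f : M ⟶ M', H.IsIsometry s s' f

section Biprod

variable [HasBinaryBiproducts C]

/-- The underlying object `Q ⊕ Q*` of the hyperbolic form. -/
def hypObj (Q : C) : C := Q ⊞ H.star Q

/-- The hyperbolic `ε`-hermitian form `H_ε(Q)` on `Q ⊕ Q*`, given in matrix form
by `[[0, id_{Q*}], [ε·ω_Q, 0]]` (composed with the canonical identification
`Q* ⊕ Q** ≅ (Q ⊕ Q*)*`). -/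
def hypForm (ε : ℤ) (Q : C) : H.hypObj Q ⟶ H.star (H.hypObj Q) :=
  biprod.lift (biprod.snd) (ε • (biprod.fst ≫ H.omega Q)) ≫
    biprod.desc (H.starMap biprod.fst) (H.starMap biprod.snd)

/-- A form is hyperbolic (as a unimodular `ε`-hermitian form) if it is isometric
to `(Q ⊕ Q*, H_ε(Q))` for some reflexive object `Q`. -/
def IsHyperbolic (ε : ℤ) {M : C} (s : M ⟶ H.star M) : Prop :=
  ∃ Q : C, H.Reflexive Q ∧ H.Isometric s (H.hypForm ε Q)

/-- The orthogonal sum of two sesquilinear forms. -/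
def orthSum {M M' : C} (s : M ⟶ H.star M) (s' : M' ⟶ H.star M') :
    M ⊞ M' ⟶ H.star (M ⊞ M') :=
  biprod.desc (s ≫ H.starMap biprod.fst) (s' ≫ H.starMap biprod.snd)

/-- The "split" form `[[0, f], [g, 0]]` on `M ⊕ N`, where `f : N ⟶ M*` and
`g : M ⟶ N*`. -/
def splitForm {M N : C} (f : N ⟶ H.star M) (g : M ⟶ H.star N) :
    M ⊞ N ⟶ H.star (M ⊞ N) :=
  biprod.desc (g ≫ H.starMap biprod.snd) (f ≫ H.starMap biprod.fst)

end Biprod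

end HermStructure

/-! ## The category of twisted double arrows -/

variable {ι : Type w}

/-- Objects of the category `TDA_I(C)` of twisted double `I`-arrows: quadruples
`(M, N, {f_i}, {g_i})` with `f_i, g_i : M ⟶ N^{*_i}`. -/
structure TDAObj (Hs : ι → HermStructure C) : Type (max u v w) where
  M : C
  N : C
  f : ∀ i, M ⟶ (Hs i).star N
  g : ∀ i, M ⟶ (Hs i).star N

namespace TDAObj

variable {Hs : ι → HermStructure C}

/-- Morphisms `(M,N,{f_i},{g_i}) ⟶ (M',N',{f'_i},{g'_i})` in `TDA_I(C)`: pairs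
`(φ, ψ^op)` with `φ : M ⟶ M'`, `ψ : N' ⟶ N`, `f'_i ∘ φ = ψ^{*_i} ∘ f_i` and
`g'_i ∘ φ = ψ^{*_i} ∘ g_i`. -/
@[ext]
structure Hom (Z Z' : TDAObj Hs) : Type v where
  φ : Z.M ⟶ Z'.M
  ψ : Z'.N ⟶ Z.N
  condf : ∀ i, φ ≫ Z'.f i = Z.f i ≫ (Hs i).starMap ψ
  condg : ∀ i, φ ≫ Z'.g i = Z.g i ≫ (Hs i).starMap ψ

instance category : Category (TDAObj Hs) where
  Hom := Hom
  id Z := ⟨𝟙 Z.M, 𝟙 Z.N, fun i => by simp [(Hs i).starMap_id],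
    fun i => by simp [(Hs i).starMap_id]⟩
  comp {Z Z' Z''} u v := ⟨u.φ ≫ v.φ, v.ψ ≫ u.ψ,
    fun i => by
      rw [Category.assoc, v.condf i, ← Category.assoc, u.condf i, (Hs i).starMap_comp,
        Category.assoc],
    fun i => by
      rw [Category.assoc, v.condg i, ← Category.assoc, u.condg i, (Hs i).starMap_comp,
        Category.assoc]⟩
  id_comp u := by apply Hom.ext <;> simp
  comp_id u := by apply Hom.ext <;> simp
  assoc u v w := by apply Hom.ext <;> simp

@[simp] theorem id_φ (Z : TDAObj Hs) : Hom.φ (𝟙 Z) = 𝟙 Z.M := rfl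
@[simp] theorem id_ψ (Z : TDAObj Hs) : Hom.ψ (𝟙 Z) = 𝟙 Z.N := rfl
@[simp] theorem comp_φ {Z Z' Z'' : TDAObj Hs} (u : Z ⟶ Z') (v : Z' ⟶ Z'') :
    (u ≫ v).φ = u.φ ≫ v.φ := rfl
@[simp] theorem comp_ψ {Z Z' Z'' : TDAObj Hs} (u : Z ⟶ Z') (v : Z' ⟶ Z'') :
    (u ≫ v).ψ = v.ψ ≫ u.ψ := rfl

theorem hom_ext {Z Z' : TDAObj Hs} {u v : Z ⟶ Z'} (h1 : Hom.φ u = Hom.φ v)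
    (h2 : Hom.ψ u = Hom.ψ v) : u = v := Hom.ext h1 h2

instance homZero (Z Z' : TDAObj Hs) : Zero (Z ⟶ Z') :=
  ⟨⟨0, 0, fun i => by simp [(Hs i).starMap_zero], fun i => by simp [(Hs i).starMap_zero]⟩⟩

instance homAdd (Z Z' : TDAObj Hs) : Add (Z ⟶ Z') :=
  ⟨fun u v => ⟨u.φ + v.φ, u.ψ + v.ψ,
    fun i => by simp [Preadditive.add_comp, Preadditive.comp_add, (Hs i).starMap_add,
      u.condf i, v.condf i],
    fun i => by simp [Preadditive.add_comp, Preadditive.comp_add, (Hs i).starMap_add,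
      u.condg i, v.condg i]⟩⟩

instance homNeg (Z Z' : TDAObj Hs) : Neg (Z ⟶ Z') :=
  ⟨fun u => ⟨-u.φ, -u.ψ,
    fun i => by simp [Preadditive.neg_comp, Preadditive.comp_neg, (Hs i).starMap_neg,
      u.condf i],
    fun i => by simp [Preadditive.neg_comp, Preadditive.comp_neg, (Hs i).starMap_neg,
      u.condg i]⟩⟩

instance homSub (Z Z' : TDAObj Hs) : Sub (Z ⟶ Z') :=
  ⟨fun u v => ⟨u.φ - v.φ, u.ψ - v.ψ,
    fun i => by simp [Preadditive.sub_comp, Preadditive.comp_sub, (Hs i).starMap_sub,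
      u.condf i, v.condf i],
    fun i => by simp [Preadditive.sub_comp, Preadditive.comp_sub, (Hs i).starMap_sub,
      u.condg i, v.condg i]⟩⟩

instance homSMulNat (Z Z' : TDAObj Hs) : SMul ℕ (Z ⟶ Z') :=
  ⟨fun n u => ⟨n • u.φ, n • u.ψ,
    fun i => by simp [Preadditive.nsmul_comp, Preadditive.comp_nsmul, (Hs i).starMap_nsmul,
      u.condf i],
    fun i => by simp [Preadditive.nsmul_comp, Preadditive.comp_nsmul, (Hs i).starMap_nsmul,
      u.condg i]⟩⟩

instance homSMulInt (Z Z' : TDAObj Hs) : SMul ℤ (Z ⟶ Z') :=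
  ⟨fun n u => ⟨n • u.φ, n • u.ψ,
    fun i => by simp [Preadditive.zsmul_comp, Preadditive.comp_zsmul, (Hs i).starMap_zsmul,
      u.condf i],
    fun i => by simp [Preadditive.zsmul_comp, Preadditive.comp_zsmul, (Hs i).starMap_zsmul,
      u.condg i]⟩⟩

@[simp] theorem add_φ {Z Z' : TDAObj Hs} (u v : Z ⟶ Z') : (u + v).φ = u.φ + v.φ := rfl
@[simp] theorem add_ψ {Z Z' : TDAObj Hs} (u v : Z ⟶ Z') : (u + v).ψ = u.ψ + v.ψ := rfl
@[simp] theorem zero_φ {Z Z' : TDAObj Hs} : (0 : Z ⟶ Z').φ = 0 := rfl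
@[simp] theorem zero_ψ {Z Z' : TDAObj Hs} : (0 : Z ⟶ Z').ψ = 0 := rfl
@[simp] theorem neg_φ {Z Z' : TDAObj Hs} (u : Z ⟶ Z') : (-u).φ = -u.φ := rfl
@[simp] theorem neg_ψ {Z Z' : TDAObj Hs} (u : Z ⟶ Z') : (-u).ψ = -u.ψ := rfl

instance homAddCommGroup (Z Z' : TDAObj Hs) : AddCommGroup (Z ⟶ Z') :=
  Function.Injective.addCommGroup (fun u => (Hom.φ u, Hom.ψ u))
    (fun u v h => by
      apply hom_ext
      · exact congrArg Prod.fst h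
      · exact congrArg Prod.snd h)
    rfl (fun _ _ => rfl) (fun _ => rfl) (fun _ _ => rfl) (fun _ _ => rfl) (fun _ _ => rfl)

instance preadditive : Preadditive (TDAObj Hs) where
  add_comp Z Z' Z'' u u' v := by apply hom_ext <;> simp
  comp_add Z Z' Z'' u v v' := by apply hom_ext <;> simp

end TDAObj

/-- The hermitian structure on the category of twisted double `I`-arrows. -/
def tdaHerm (Hs : ι → HermStructure C) : HermStructure (TDAObj Hs) where
  star Z := ⟨Z.N, Z.M, fun i => (Hs i).omega Z.N ≫ (Hs i).starMap (Z.g i),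
    fun i => (Hs i).omega Z.N ≫ (Hs i).starMap (Z.f i)⟩
  starMap {Z Z'} u := ⟨u.ψ, u.φ,
    fun i => by
      rw [← Category.assoc, (Hs i).omega_natural u.ψ, Category.assoc, Category.assoc,
        ← (Hs i).starMap_comp, ← u.condg i, (Hs i).starMap_comp],
    fun i => by
      rw [← Category.assoc, (Hs i).omega_natural u.ψ, Category.assoc, Category.assoc,
        ← (Hs i).starMap_comp, ← u.condf i, (Hs i).starMap_comp]⟩
  starMap_id Z := by apply TDAObj.hom_ext <;> rfl
  starMap_comp u v := by apply TDAObj.hom_ext <;> rfl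
  starMap_add u v := by apply TDAObj.hom_ext <;> rfl
  omega Z := ⟨𝟙 Z.M, 𝟙 Z.N,
    fun i => by
      simp only [Category.id_comp, (Hs i).starMap_id, Category.comp_id]
      rw [(Hs i).starMap_comp, ← Category.assoc, ← (Hs i).omega_natural (Z.f i),
        Category.assoc, (Hs i).omega_star, Category.comp_id],
    fun i => by
      simp only [Category.id_comp, (Hs i).starMap_id, Category.comp_id]
      rw [(Hs i).starMap_comp, ← Category.assoc, ← (Hs i).omega_natural (Z.g i),
        Category.assoc, (Hs i).omega_star, Category.comp_id]⟩
  omega_natural u := by apply TDAObj.hom_ext <;> simp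
  omega_star Z := by apply TDAObj.hom_ext <;> simp

/-! ## Biproducts in `TDA_I(C)` -/

namespace TDAObj

variable {Hs : ι → HermStructure C} [HasBinaryBiproducts C]

/-- The biproduct of two objects of `TDA_I(C)`. -/
def biprodObj (Z W : TDAObj Hs) : TDAObj Hs where
  M := Z.M ⊞ W.M
  N := Z.N ⊞ W.N
  f i := biprod.desc (Z.f i ≫ (Hs i).starMap biprod.fst) (W.f i ≫ (Hs i).starMap biprod.snd)
  g i := biprod.desc (Z.g i ≫ (Hs i).starMap biprod.fst) (W.g i ≫ (Hs i).starMap biprod.snd)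

/-- The binary bicone exhibiting `biprodObj Z W` as a biproduct. -/
def biprodBicone (Z W : TDAObj Hs) : BinaryBicone Z W where
  pt := biprodObj Z W
  fst := ⟨biprod.fst, biprod.inl,
    fun i => by
      apply biprod.hom_ext' <;>
      simp [biprodObj, ← (Hs i).starMap_comp, (Hs i).starMap_zero, (Hs i).starMap_id],
    fun i => by
      apply biprod.hom_ext' <;>
      simp [biprodObj, ← (Hs i).starMap_comp, (Hs i).starMap_zero, (Hs i).starMap_id]⟩
  snd := ⟨biprod.snd, biprod.inr,
    fun i => by
      apply biprod.hom_ext' <;>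
      simp [biprodObj, ← (Hs i).starMap_comp, (Hs i).starMap_zero, (Hs i).starMap_id],
    fun i => by
      apply biprod.hom_ext' <;>
      simp [biprodObj, ← (Hs i).starMap_comp, (Hs i).starMap_zero, (Hs i).starMap_id]⟩
  inl := ⟨biprod.inl, biprod.fst,
    fun i => by simp [biprodObj],
    fun i => by simp [biprodObj]⟩
  inr := ⟨biprod.inr, biprod.snd,
    fun i => by simp [biprodObj],
    fun i => by simp [biprodObj]⟩
  inl_fst := by apply hom_ext <;> first | exact biprod.inl_fst | exact biprod.inl_snd | exact biprod.inr_fst | exact biprod.inr_snd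
  inl_snd := by apply hom_ext <;> first | exact biprod.inl_fst | exact biprod.inl_snd | exact biprod.inr_fst | exact biprod.inr_snd
  inr_fst := by apply hom_ext <;> first | exact biprod.inl_fst | exact biprod.inl_snd | exact biprod.inr_fst | exact biprod.inr_snd
  inr_snd := by apply hom_ext <;> first | exact biprod.inl_fst | exact biprod.inl_snd | exact biprod.inr_fst | exact biprod.inr_snd

instance hasBinaryBiproducts : HasBinaryBiproducts (TDAObj Hs) where
  has_binary_biproduct Z W :=
    hasBinaryBiproduct_of_total (biprodBicone Z W) (by apply hom_ext <;> exact biprod.total)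

end TDAObj

/-! ## Isomorphisms in `TDA_I(C)` -/

namespace TDAObj

variable {Hs : ι → HermStructure C}

theorem isIso_of {Z Z' : TDAObj Hs} (u : Z ⟶ Z') (h1 : IsIso u.φ) (h2 : IsIso u.ψ) :
    IsIso u := by
  refine ⟨⟨⟨inv u.φ, inv u.ψ, fun i => ?_, fun i => ?_⟩, ?_, ?_⟩⟩
  · have h := u.condf i
    have : Z'.f i = inv u.φ ≫ Z.f i ≫ (Hs i).starMap u.ψ := by
      rw [← h, IsIso.inv_hom_id_assoc]
    rw [this, Category.assoc, Category.assoc, ← (Hs i).starMap_comp,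
      IsIso.inv_hom_id, (Hs i).starMap_id, Category.comp_id]
  · have h := u.condg i
    have : Z'.g i = inv u.φ ≫ Z.g i ≫ (Hs i).starMap u.ψ := by
      rw [← h, IsIso.inv_hom_id_assoc]
    rw [this, Category.assoc, Category.assoc, ← (Hs i).starMap_comp,
      IsIso.inv_hom_id, (Hs i).starMap_id, Category.comp_id]
  · apply hom_ext <;> simp
  · apply hom_ext <;> simp

end TDAObj

/-! ## Categories of (systems of) sesquilinear forms -/

/-- Objects of the category `Sesq(C)` of sesquilinear forms over `(C, H)`. -/
structure FormObj (H : HermStructure C) : Type (max u v) where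
  pt : C
  form : pt ⟶ H.star pt

namespace FormObj

variable {H : HermStructure C}

/-- `Sesq(C)`: morphisms are isometries. -/
instance category : Category (FormObj H) where
  Hom X Y := { f : X.pt ⟶ Y.pt // H.IsIsometry X.form Y.form f }
  id X := ⟨𝟙 X.pt, inferInstance, by simp [H.starMap_id]⟩
  comp {X Y Z} u v := ⟨u.1 ≫ v.1, by
    obtain ⟨uf, hu1, hu2⟩ := u
    obtain ⟨vf, hv1, hv2⟩ := v
    haveI := hu1; haveI := hv1
    refine ⟨inferInstance, ?_⟩
    show X.form = (uf ≫ vf) ≫ Z.form ≫ H.starMap (uf ≫ vf)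
    rw [hu2, hv2, H.starMap_comp]
    simp⟩
  id_comp u := by apply Subtype.ext; simp
  comp_id u := by apply Subtype.ext; simp
  assoc u v w := by apply Subtype.ext; simp

@[simp] theorem id_val (X : FormObj H) : (𝟙 X : X ⟶ X).1 = 𝟙 X.pt := rfl
@[simp] theorem comp_val {X Y Z : FormObj H} (u : X ⟶ Y) (v : Y ⟶ Z) :
    (u ≫ v).1 = u.1 ≫ v.1 := rfl

end FormObj

/-- The predicate selecting unimodular `ε`-hermitian forms. -/
def hermPred (H : HermStructure C) (ε : ℤ) : FormObj H → Prop :=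
  fun X => H.IsUnimodular X.form ∧ H.IsEpsHermitian ε X.form

/-- The category `Herm_ε(C)` of unimodular `ε`-hermitian forms over `(C, H)`. -/
abbrev HermFormCat (H : HermStructure C) (ε : ℤ) := ObjectProperty.FullSubcategory (hermPred H ε)

/-- Objects of the category of systems of sesquilinear forms over `(C, {(*_i, ω_i)})`. -/
structure SysFormObj (Hs : ι → HermStructure C) : Type (max u v w) where
  pt : C
  form : ∀ i, pt ⟶ (Hs i).star pt

namespace SysFormObj

variable {Hs : ι → HermStructure C}

/-- `f` is an isometry of systems of sesquilinear forms. -/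
def IsIsometry (X Y : SysFormObj Hs) (f : X.pt ⟶ Y.pt) : Prop :=
  IsIso f ∧ ∀ i, X.form i = f ≫ Y.form i ≫ (Hs i).starMap f

/-- Two systems of sesquilinear forms are isometric. -/
def Isometric (X Y : SysFormObj Hs) : Prop := ∃ f, IsIsometry X Y f

/-- The category of systems of sesquilinear forms, with isometries as morphisms. -/
instance category : Category (SysFormObj Hs) where
  Hom X Y := { f : X.pt ⟶ Y.pt // IsIsometry X Y f }
  id X := ⟨𝟙 X.pt, inferInstance, fun i => by simp [(Hs i).starMap_id]⟩
  comp {X Y Z} u v := ⟨u.1 ≫ v.1, by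
    obtain ⟨uf, hu1, hu2⟩ := u
    obtain ⟨vf, hv1, hv2⟩ := v
    haveI := hu1; haveI := hv1
    refine ⟨inferInstance, fun i => ?_⟩
    show X.form i = (uf ≫ vf) ≫ Z.form i ≫ (Hs i).starMap (uf ≫ vf)
    rw [hu2 i, hv2 i, (Hs i).starMap_comp]
    simp⟩
  id_comp u := by apply Subtype.ext; simp
  comp_id u := by apply Subtype.ext; simp
  assoc u v w := by apply Subtype.ext; simp

/-- The orthogonal sum of two systems of sesquilinear forms. -/
def orthSum [HasBinaryBiproducts C] (X Y : SysFormObj Hs) : SysFormObj Hs where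
  pt := X.pt ⊞ Y.pt
  form i := biprod.desc (X.form i ≫ (Hs i).starMap biprod.fst)
    (Y.form i ≫ (Hs i).starMap biprod.snd)

end SysFormObj

/-! ## The functor `F` from (systems of) sesquilinear forms to hermitian forms over `TDA` -/

section FFunctor

variable {Hs : ι → HermStructure C}

theorem HermStructure.omega_starMap_key (H : HermStructure C) {M : C}
    (s : M ⟶ H.star M) :
    H.omega M ≫ H.starMap (H.omega M ≫ H.starMap s) = s := by
  rw [H.starMap_comp, ← Category.assoc, ← H.omega_natural s, Category.assoc,
    H.omega_star, Category.comp_id]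

/-- The twisted double arrow `Z(M, {s_i}) = (M, M, {s_i^* ∘ ω_M}, {s_i})` associated with a
system of sesquilinear forms. -/
def sysZ {M : C} (s : ∀ i, M ⟶ (Hs i).star M) : TDAObj Hs :=
  ⟨M, M, fun i => (Hs i).omega M ≫ (Hs i).starMap (s i), fun i => s i⟩

/-- The canonical `1`-hermitian form `(id_M, id_M^op)` on `Z(M, {s_i})`. -/
def sysZForm {M : C} (s : ∀ i, M ⟶ (Hs i).star M) :
    sysZ s ⟶ (tdaHerm Hs).star (sysZ s) :=
  ⟨𝟙 M, 𝟙 M,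
    fun i => by
      simp only [tdaHerm, sysZ, Category.id_comp, (Hs i).starMap_id, Category.comp_id],
    fun i => by
      simp only [tdaHerm, sysZ, Category.id_comp, (Hs i).starMap_id, Category.comp_id]
      rw [(Hs i).omega_starMap_key]⟩

theorem sysZForm_isIso {M : C} (s : ∀ i, M ⟶ (Hs i).star M) : IsIso (sysZForm s) :=
  TDAObj.isIso_of (sysZForm s) (inferInstanceAs (IsIso (𝟙 M)))
    (inferInstanceAs (IsIso (𝟙 M)))

theorem sysZForm_unimodular {M : C} (s : ∀ i, M ⟶ (Hs i).star M) :
    (tdaHerm Hs).IsUnimodular (sysZForm s) := by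
  constructor
  · exact sysZForm_isIso s
  · exact TDAObj.isIso_of _ (inferInstanceAs (IsIso (𝟙 M ≫ 𝟙 M)))
      (inferInstanceAs (IsIso (𝟙 M ≫ 𝟙 M)))

theorem sysZForm_hermitian {M : C} (s : ∀ i, M ⟶ (Hs i).star M) :
    (tdaHerm Hs).IsEpsHermitian 1 (sysZForm s) := by
  apply TDAObj.hom_ext <;> simp [tdaHerm, sysZForm] <;> erw [one_smul] <;>
    exact (Category.comp_id _).symm

/-- The object part of the functor `F`. -/
def Fobj (X : SysFormObj Hs) : HermFormCat (tdaHerm Hs) 1 :=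
  ⟨⟨sysZ X.form, sysZForm X.form⟩, ⟨sysZForm_unimodular X.form, sysZForm_hermitian X.form⟩⟩

/-- The map part of the functor `F`. -/
def Fmap {X Y : SysFormObj Hs} (u : X ⟶ Y) : Fobj X ⟶ Fobj Y := by
  haveI := u.2.1
  refine ⟨⟨⟨u.1, (inv u.1 : Y.pt ⟶ X.pt), fun i => ?_, fun i => ?_⟩, ?_, ?_⟩⟩
  · show u.1 ≫ (Hs i).omega Y.pt ≫ (Hs i).starMap (Y.form i) =
      ((Hs i).omega X.pt ≫ (Hs i).starMap (X.form i)) ≫ (Hs i).starMap (inv u.1)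
    calc u.1 ≫ (Hs i).omega Y.pt ≫ (Hs i).starMap (Y.form i)
        = (Hs i).omega X.pt ≫ (Hs i).starMap ((Hs i).starMap u.1) ≫
            (Hs i).starMap (Y.form i) := by
          rw [← Category.assoc, (Hs i).omega_natural u.1, Category.assoc]
      _ = (Hs i).omega X.pt ≫ (Hs i).starMap (Y.form i ≫ (Hs i).starMap u.1) := by
          rw [(Hs i).starMap_comp]
      _ = (Hs i).omega X.pt ≫ (Hs i).starMap (inv u.1 ≫ X.form i) := by
          rw [u.2.2 i, IsIso.inv_hom_id_assoc]
      _ = ((Hs i).omega X.pt ≫ (Hs i).starMap (X.form i)) ≫ (Hs i).starMap (inv u.1) := by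
          rw [(Hs i).starMap_comp, Category.assoc]
  · show u.1 ≫ Y.form i = X.form i ≫ (Hs i).starMap (inv u.1)
    rw [u.2.2 i, Category.assoc, Category.assoc, ← (Hs i).starMap_comp,
      IsIso.inv_hom_id, (Hs i).starMap_id, Category.comp_id]
  · exact TDAObj.isIso_of _ (by show IsIso u.1; infer_instance)
      (by show IsIso (inv u.1); infer_instance)
  · apply TDAObj.hom_ext
    · show 𝟙 X.pt = u.1 ≫ 𝟙 Y.pt ≫ inv u.1
      simp
    · show 𝟙 X.pt = (u.1 ≫ 𝟙 Y.pt) ≫ inv u.1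
      simp

/-- The functor `F` from systems of sesquilinear forms over `(C, {(*_i, ω_i)})` to
unimodular `1`-hermitian forms over `TDA_I(C)`, given by
`F(M, {s_i}) = ((M, M, {s_i^{*_i} ∘ ω_{i,M}}, {s_i}), (id_M, id_M^op))` and
`F(ψ) = (ψ, (ψ⁻¹)^op)`. -/
def Ffunctor (Hs : ι → HermStructure C) : SysFormObj Hs ⥤ HermFormCat (tdaHerm Hs) 1 where
  obj := Fobj
  map := Fmap
  map_id X := by
    haveI : IsIso ((𝟙 X : X ⟶ X).1) := (𝟙 X : X ⟶ X).2.1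
    apply ObjectProperty.hom_ext; apply Subtype.ext; apply TDAObj.hom_ext
    · rfl
    · show inv ((𝟙 X : X ⟶ X).1) = 𝟙 X.pt
      change inv (𝟙 X.pt) = 𝟙 X.pt
      simp
  map_comp {X Y Z} u v := by
    haveI := u.2.1; haveI := v.2.1
    haveI : IsIso ((u ≫ v).1) := (u ≫ v).2.1
    apply ObjectProperty.hom_ext; apply Subtype.ext; apply TDAObj.hom_ext
    · rfl
    · show inv ((u ≫ v).1) = inv v.1 ≫ inv u.1
      change inv (u.1 ≫ v.1) = inv v.1 ≫ inv u.1
      simp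

end FFunctor

end HermCat

/-! ## Scalar extension of linear categories -/

namespace HermCat

open TensorProduct

universe rv ku

/-- Objects of the scalar extension `C ⊗_K R`: formal symbols `M_R` for `M ∈ C`. -/
structure ExtObj (K : Type ku) (R : Type rv) (C : Type u) : Type u where
  base : C

section Extension

variable (K : Type ku) [CommRing K] (R : Type rv) [CommRing R] [Algebra K R]
variable {C : Type u} [Category.{v} C] [Preadditive C] [CategoryTheory.Linear K C]

/-- Composition as a `K`-bilinear map. -/
def compBil (X Y Z : C) : (X ⟶ Y) →ₗ[K] (Y ⟶ Z) →ₗ[K] (X ⟶ Z) :=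
  LinearMap.mk₂ K (fun f g => f ≫ g)
    (fun f f' g => Preadditive.add_comp _ _ _ f f' g)
    (fun c f g => CategoryTheory.Linear.smul_comp _ _ _ c f g)
    (fun f g g' => Preadditive.comp_add _ _ _ f g g')
    (fun c f g => CategoryTheory.Linear.comp_smul _ _ _ f c g)

/-- The extension of a `K`-bilinear map to the scalar extensions by `R`,
`(m ⊗ a, n ⊗ b) ↦ B m n ⊗ ab`. -/
def tensorBil {M N P : Type*} [AddCommGroup M] [AddCommGroup N] [AddCommGroup P]
    [Module K M] [Module K N] [Module K P] (B : M →ₗ[K] N →ₗ[K] P) :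
    M ⊗[K] R →ₗ[K] N ⊗[K] R →ₗ[K] P ⊗[K] R :=
  TensorProduct.lift (LinearMap.mk₂ K
    (fun m a => TensorProduct.lift (LinearMap.mk₂ K (fun n b => B m n ⊗ₜ[K] (a * b))
      (fun n n' b => by (try dsimp only); rw [map_add, add_tmul])
      (fun c n b => by (try dsimp only); rw [map_smul, smul_tmul'])
      (fun n b b' => by (try dsimp only); rw [mul_add, tmul_add])
      (fun c n b => by (try dsimp only); rw [mul_smul_comm, tmul_smul])))
    (fun m m' a => by
      apply TensorProduct.ext'
      intro n b
      simp [map_add, add_tmul])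
    (fun c m a => by
      apply TensorProduct.ext'
      intro n b
      simp [map_smul, smul_tmul'])
    (fun m a a' => by
      apply TensorProduct.ext'
      intro n b
      simp [add_mul, tmul_add])
    (fun c m a => by
      apply TensorProduct.ext'
      intro n b
      simp [smul_mul_assoc, tmul_smul]))

/-- The category `C ⊗_K R` with `Hom(M_R, N_R) = Hom_C(M, N) ⊗_K R`. -/
instance ExtObj.category : Category.{max v rv} (ExtObj K R C) where
  Hom X Y := (X.base ⟶ Y.base) ⊗[K] R
  id X := 𝟙 X.base ⊗ₜ[K] 1
  comp {X Y Z} f g := tensorBil K R (compBil K X.base Y.base Z.base) f g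
  id_comp {X Y} f := by
    induction f using TensorProduct.induction_on with
    | zero => simp [map_zero]
    | tmul u a =>
      show tensorBil K R _ (𝟙 X.base ⊗ₜ[K] 1) (u ⊗ₜ[K] a) = u ⊗ₜ[K] a
      rw [tensorBil]
      simp [compBil]
    | add f g hf hg =>
      show tensorBil K R _ _ (f + g) = f + g
      rw [map_add]
      exact congrArg₂ (· + ·) hf hg
  comp_id {X Y} f := by
    induction f using TensorProduct.induction_on with
    | zero => simp [map_zero]
    | tmul u a =>
      show tensorBil K R _ (u ⊗ₜ[K] a) (𝟙 Y.base ⊗ₜ[K] 1) = u ⊗ₜ[K] a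
      rw [tensorBil]
      simp [compBil]
    | add f g hf hg =>
      show tensorBil K R _ (f + g) _ = f + g
      rw [map_add, LinearMap.add_apply]
      exact congrArg₂ (· + ·) hf hg
  assoc {W X Y Z} f g h := by
    show tensorBil K R _ (tensorBil K R _ f g) h = tensorBil K R _ f (tensorBil K R _ g h)
    induction f using TensorProduct.induction_on with
    | zero => simp only [map_zero, LinearMap.zero_apply]
    | tmul u a =>
      induction g using TensorProduct.induction_on with
      | zero => simp only [map_zero, LinearMap.zero_apply]
      | tmul v b =>
        induction h using TensorProduct.induction_on with
        | zero => simp only [map_zero, LinearMap.zero_apply]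
        | tmul w c =>
          simp only [tensorBil, lift.tmul, LinearMap.mk₂_apply, compBil,
            Category.assoc, mul_assoc]
        | add h1 h2 ih1 ih2 =>
          simp only [map_add, LinearMap.add_apply] at ih1 ih2 ⊢
          rw [ih1, ih2]
      | add g1 g2 ih1 ih2 =>
        simp only [map_add, LinearMap.add_apply] at ih1 ih2 ⊢
        rw [ih1, ih2]
    | add f1 f2 ih1 ih2 =>
      simp only [map_add, LinearMap.add_apply] at ih1 ih2 ⊢
      rw [ih1, ih2]

instance ExtObj.homAddCommGroup (X Y : ExtObj K R C) : AddCommGroup (X ⟶ Y) :=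
  inferInstanceAs (AddCommGroup ((X.base ⟶ Y.base) ⊗[K] R))

instance ExtObj.homModule (X Y : ExtObj K R C) : Module K (X ⟶ Y) :=
  inferInstanceAs (Module K ((X.base ⟶ Y.base) ⊗[K] R))

instance ExtObj.preadditive : Preadditive (ExtObj K R C) where
  add_comp X Y Z f f' g := by
    show tensorBil K R _ (f + f') g = tensorBil K R _ f g + tensorBil K R _ f' g
    rw [map_add, LinearMap.add_apply]
  comp_add X Y Z f g g' := by
    show tensorBil K R _ f (g + g') = tensorBil K R _ f g + tensorBil K R _ f g'
    rw [map_add]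

instance ExtObj.linear : CategoryTheory.Linear K (ExtObj K R C) where
  smul_comp X Y Z c f g := by
    show tensorBil K R _ (c • f) g = c • tensorBil K R _ f g
    rw [map_smul, LinearMap.smul_apply]
  comp_smul X Y Z f c g := by
    show tensorBil K R _ f (c • g) = c • tensorBil K R _ f g
    rw [map_smul]

/-- The scalar extension functor `C → C ⊗_K R`, `M ↦ M_R`, `f ↦ f ⊗ 1`. -/
def extFunctor : C ⥤ ExtObj K R C where
  obj M := ⟨M⟩
  map f := f ⊗ₜ[K] 1
  map_id M := rfl
  map_comp {X Y Z} f g := by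
    show (f ≫ g) ⊗ₜ[K] 1 = tensorBil K R _ (f ⊗ₜ[K] 1) (g ⊗ₜ[K] 1)
    rw [tensorBil]
    simp [compBil]

/-- A hermitian structure is `K`-linear if `*` is `K`-linear on Hom-modules. -/
class HermKLinear (H : HermStructure C) : Prop where
  starMap_smul : ∀ (a : K) ⦃X Y : C⦄ (f : X ⟶ Y), H.starMap (a • f) = a • H.starMap f

/-- `starMap` as a `K`-linear map. -/
def starLin (H : HermStructure C) [hH : HermKLinear K H] (X Y : C) :
    (X ⟶ Y) →ₗ[K] (H.star Y ⟶ H.star X) where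
  toFun := H.starMap
  map_add' f g := H.starMap_add f g
  map_smul' a f := hH.starMap_smul a f

/-- The extension of a `K`-linear hermitian structure on `C` to `C ⊗_K R`:
`(M_R)* = (M*)_R`, `(f ⊗ a)* = f* ⊗ a`, `ω_{M_R} = ω_M ⊗ 1`. -/
def extHerm (H : HermStructure C) [HermKLinear K H] :
    HermStructure (ExtObj K R C) where
  star X := ⟨H.star X.base⟩
  starMap {X Y} f := TensorProduct.map (starLin K H X.base Y.base) LinearMap.id f
  starMap_id X := by
    show TensorProduct.map _ _ (𝟙 X.base ⊗ₜ[K] 1) = 𝟙 (H.star X.base) ⊗ₜ[K] 1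
    rw [TensorProduct.map_tmul]
    simp [starLin, H.starMap_id]
  starMap_comp {X Y Z} f g := by
    show TensorProduct.map (starLin K H X.base Z.base) LinearMap.id (tensorBil K R _ f g) =
      tensorBil K R _ (TensorProduct.map (starLin K H Y.base Z.base) LinearMap.id g)
        (TensorProduct.map (starLin K H X.base Y.base) LinearMap.id f)
    induction f using TensorProduct.induction_on with
    | zero => simp only [map_zero, LinearMap.zero_apply, LinearMap.map_zero]
    | tmul u a =>
      induction g using TensorProduct.induction_on with
      | zero => simp only [map_zero, LinearMap.zero_apply, LinearMap.map_zero]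
      | tmul v b =>
        simp only [tensorBil, lift.tmul, LinearMap.mk₂_apply, TensorProduct.map_tmul,
          compBil]
        simp [starLin, H.starMap_comp, mul_comm]
      | add g1 g2 ih1 ih2 =>
        simp only [map_add, LinearMap.add_apply] at ih1 ih2 ⊢
        rw [ih1, ih2]
    | add f1 f2 ih1 ih2 =>
      simp only [map_add, LinearMap.add_apply] at ih1 ih2 ⊢
      rw [ih1, ih2]
  starMap_add f g := by (try dsimp only); rw [map_add]
  omega X := H.omega X.base ⊗ₜ[K] 1
  omega_natural {X Y} f := by
    show tensorBil K R _ f (H.omega Y.base ⊗ₜ[K] 1) =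
      tensorBil K R _ (H.omega X.base ⊗ₜ[K] 1)
        (TensorProduct.map (starLin K H _ _) LinearMap.id
          (TensorProduct.map (starLin K H _ _) LinearMap.id f))
    induction f using TensorProduct.induction_on with
    | zero => simp only [map_zero, LinearMap.zero_apply, LinearMap.map_zero]
    | tmul u a =>
      simp only [tensorBil, lift.tmul, LinearMap.mk₂_apply, TensorProduct.map_tmul,
        compBil]
      simp [starLin, H.omega_natural u, mul_comm]
    | add f1 f2 ih1 ih2 =>
      simp only [map_add, LinearMap.add_apply] at ih1 ih2 ⊢
      rw [ih1, ih2]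
  omega_star X := by
    show tensorBil K R _ (H.omega (H.star X.base) ⊗ₜ[K] 1)
      (TensorProduct.map _ _ (H.omega X.base ⊗ₜ[K] 1)) = 𝟙 (H.star X.base) ⊗ₜ[K] 1
    rw [TensorProduct.map_tmul]
    simp only [tensorBil, lift.tmul, LinearMap.mk₂_apply, compBil]
    simp [starLin, H.omega_star]

/-- Scalar extension of a system of sesquilinear forms. -/
def extSys {ι : Type w} {Hs : ι → HermStructure C} [∀ i, HermKLinear K (Hs i)]
    (X : SysFormObj Hs) : SysFormObj (fun i => extHerm K R (Hs i)) where
  pt := ⟨X.pt⟩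
  form i := X.form i ⊗ₜ[K] 1

end Extension

end HermCat

namespace HermCatAux


open Function

universe uv

section Counting

variable {R : Type*} [Ring R]

private noncomputable def injCard (R : Type*) [Ring R] (X Y : Type*) [AddCommGroup X]
    [Module R X] [AddCommGroup Y] [Module R Y] : ℕ :=
  Nat.card {f : X →ₗ[R] Y // Function.Injective f}

private lemma finite_linearMap (X Y : Type*) [AddCommGroup X] [Module R X] [AddCommGroup Y]
    [Module R Y] [Finite X] [Finite Y] : Finite (X →ₗ[R] Y) :=
  Finite.of_injective (fun f => (f : X → Y)) DFunLike.coe_injective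

/-- fibers of the kernel map are in bijection with injective maps from the quotient. -/
private def fiberEquivInj {X' : Type*} [AddCommGroup X'] [Module R X'] (W : Submodule R X')
    (Y : Type*) [AddCommGroup Y] [Module R Y] :
    {f : X' →ₗ[R] Y // LinearMap.ker f = W} ≃ {g : (X' ⧸ W) →ₗ[R] Y // Function.Injective g} where
  toFun f := ⟨W.liftQ f.1 (le_of_eq f.2.symm), by
    rw [← LinearMap.ker_eq_bot]
    exact Submodule.ker_liftQ_eq_bot' W f.1 f.2.symm⟩
  invFun g := ⟨g.1 ∘ₗ W.mkQ, by
    rw [LinearMap.ker_comp, LinearMap.ker_eq_bot.mpr g.2, Submodule.comap_bot,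
      Submodule.ker_mkQ]⟩
  left_inv f := by
    apply Subtype.ext
    exact W.liftQ_mkQ f.1 _
  right_inv g := by
    apply Subtype.ext
    apply LinearMap.ext
    intro x
    obtain ⟨y, rfl⟩ := W.mkQ_surjective x
    rfl

private lemma finite_submodule (X : Type*) [AddCommGroup X] [Module R X] [Finite X] :
    Finite (Submodule R X) :=
  Finite.of_injective (fun W => ((W : Set X) : Set X)) SetLike.coe_injective

private lemma card_hom_eq_sum (X Y : Type*) [AddCommGroup X] [Module R X] [Finite X]
    [AddCommGroup Y] [Module R Y] [Finite Y] [Fintype (Submodule R X)] :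
    Nat.card (X →ₗ[R] Y) = ∑ W : Submodule R X, injCard R (X ⧸ W) Y := by
  haveI := finite_linearMap (R := R) X Y
  have e1 : (X →ₗ[R] Y) ≃ Σ W : Submodule R X, {f : X →ₗ[R] Y // LinearMap.ker f = W} :=
    (Equiv.sigmaFiberEquiv (fun f : X →ₗ[R] Y => LinearMap.ker f)).symm
  rw [Nat.card_congr e1]
  haveI : ∀ W : Submodule R X, Finite {f : X →ₗ[R] Y // LinearMap.ker f = W} := fun W =>
    Subtype.finite
  haveI : ∀ W : Submodule R X, Fintype {f : X →ₗ[R] Y // LinearMap.ker f = W} := fun W =>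
    Fintype.ofFinite _
  rw [Nat.card_eq_fintype_card, Fintype.card_sigma]
  refine Finset.sum_congr rfl fun W _ => ?_
  rw [← Nat.card_eq_fintype_card, injCard, Nat.card_congr (fiberEquivInj W Y)]

private def injSubtypeEquiv {X X' Y Y' : Type*} [AddCommGroup X] [Module R X] [AddCommGroup X']
    [Module R X'] [AddCommGroup Y] [Module R Y] [AddCommGroup Y'] [Module R Y']
    (e : X ≃ₗ[R] X') (e' : Y ≃ₗ[R] Y') :
    {f : X →ₗ[R] Y // Function.Injective f} ≃ {f : X' →ₗ[R] Y' // Function.Injective f} where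
  toFun f := ⟨e'.toLinearMap ∘ₗ f.1 ∘ₗ e.symm.toLinearMap,
    e'.injective.comp (f.2.comp e.symm.injective)⟩
  invFun f := ⟨e'.symm.toLinearMap ∘ₗ f.1 ∘ₗ e.toLinearMap,
    e'.symm.injective.comp (f.2.comp e.injective)⟩
  left_inv f := by
    apply Subtype.ext; apply LinearMap.ext; intro x; simp
  right_inv f := by
    apply Subtype.ext; apply LinearMap.ext; intro x; simp

private lemma injCard_congr {X X' Y Y' : Type*} [AddCommGroup X] [Module R X] [AddCommGroup X']
    [Module R X'] [AddCommGroup Y] [Module R Y] [AddCommGroup Y'] [Module R Y']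
    (e : X ≃ₗ[R] X') (e' : Y ≃ₗ[R] Y') : injCard R X Y = injCard R X' Y' :=
  Nat.card_congr (injSubtypeEquiv e e')

private lemma card_quotient_lt {X : Type*} [AddCommGroup X] [Module R X] [Finite X]
    {W : Submodule R X} (hW : W ≠ ⊥) : Nat.card (X ⧸ W) < Nat.card X := by
  haveI : Finite (X ⧸ W) := Finite.of_surjective _ W.mkQ_surjective
  haveI : Fintype X := Fintype.ofFinite _
  haveI : Fintype (X ⧸ W) := Fintype.ofFinite _
  rw [Nat.card_eq_fintype_card, Nat.card_eq_fintype_card]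
  obtain ⟨x, hxW, hx0⟩ := Submodule.exists_mem_ne_zero_of_ne_bot hW
  refine Fintype.card_lt_of_surjective_not_injective _ W.mkQ_surjective fun hinj => hx0 ?_
  have : W.mkQ x = W.mkQ 0 := by
    simp [Submodule.Quotient.mk_eq_zero, hxW]
  exact hinj this

private lemma injCard_eq_of_homCard_eq {U V : Type uv} [AddCommGroup U] [Module R U]
    [AddCommGroup V] [Module R V] [Finite U] [Finite V]
    (hh : ∀ (X : Type uv) [AddCommGroup X] [Module R X] [Finite X],
      Nat.card (X →ₗ[R] U) = Nat.card (X →ₗ[R] V)) :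
    ∀ (X : Type uv) [AddCommGroup X] [Module R X] [Finite X], injCard R X U = injCard R X V := by
  suffices H : ∀ (n : ℕ) (X : Type uv) [AddCommGroup X] [Module R X] [Finite X],
      Nat.card X = n → injCard R X U = injCard R X V by
    intro X _ _ _
    exact H _ X rfl
  intro n
  induction n using Nat.strong_induction_on with
  | _ n IH =>
    intro X _ _ _ hn
    classical
    haveI := finite_submodule (R := R) X
    haveI : Fintype (Submodule R X) := Fintype.ofFinite _
    have hU := card_hom_eq_sum (R := R) X U
    have hV := card_hom_eq_sum (R := R) X V
    have hsum : ∑ W : Submodule R X, injCard R (X ⧸ W) U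
        = ∑ W : Submodule R X, injCard R (X ⧸ W) V := by
      rw [← hU, ← hV]; exact hh X
    have htail : ∀ W ∈ Finset.univ.erase (⊥ : Submodule R X),
        injCard R (X ⧸ W) U = injCard R (X ⧸ W) V := by
      intro W hW
      have hWne : W ≠ ⊥ := (Finset.mem_erase.mp hW).1
      haveI : Finite (X ⧸ W) := Finite.of_surjective _ W.mkQ_surjective
      exact IH (Nat.card (X ⧸ W)) (hn ▸ card_quotient_lt hWne) (X ⧸ W) rfl
    have hbotU : injCard R (X ⧸ (⊥ : Submodule R X)) U = injCard R X U :=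
      injCard_congr (Submodule.quotEquivOfEqBot _ rfl) (LinearEquiv.refl R U)
    have hbotV : injCard R (X ⧸ (⊥ : Submodule R X)) V = injCard R X V :=
      injCard_congr (Submodule.quotEquivOfEqBot _ rfl) (LinearEquiv.refl R V)
    have h1 := Finset.add_sum_erase Finset.univ (fun W => injCard R (X ⧸ W) U)
      (Finset.mem_univ (⊥ : Submodule R X))
    have h2 := Finset.add_sum_erase Finset.univ (fun W => injCard R (X ⧸ W) V)
      (Finset.mem_univ (⊥ : Submodule R X))
    have h3 : ∑ W ∈ Finset.univ.erase (⊥ : Submodule R X), injCard R (X ⧸ W) U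
        = ∑ W ∈ Finset.univ.erase (⊥ : Submodule R X), injCard R (X ⧸ W) V :=
      Finset.sum_congr rfl htail
    rw [← hbotU, ← hbotV]
    have key : injCard R (X ⧸ (⊥ : Submodule R X)) U
          + ∑ W ∈ Finset.univ.erase (⊥ : Submodule R X), injCard R (X ⧸ W) V
        = injCard R (X ⧸ (⊥ : Submodule R X)) V
          + ∑ W ∈ Finset.univ.erase (⊥ : Submodule R X), injCard R (X ⧸ W) V := by
      calc injCard R (X ⧸ (⊥ : Submodule R X)) U
            + ∑ W ∈ Finset.univ.erase (⊥ : Submodule R X), injCard R (X ⧸ W) V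
          = injCard R (X ⧸ (⊥ : Submodule R X)) U
            + ∑ W ∈ Finset.univ.erase (⊥ : Submodule R X), injCard R (X ⧸ W) U := by rw [h3]
        _ = ∑ W : Submodule R X, injCard R (X ⧸ W) U := h1
        _ = ∑ W : Submodule R X, injCard R (X ⧸ W) V := hsum
        _ = injCard R (X ⧸ (⊥ : Submodule R X)) V
            + ∑ W ∈ Finset.univ.erase (⊥ : Submodule R X), injCard R (X ⧸ W) V := h2.symm
    exact Nat.add_right_cancel key

private def homPiEquiv (X : Type*) [AddCommGroup X] [Module R X] (d : ℕ) (U : Type*)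
    [AddCommGroup U] [Module R U] :
    (X →ₗ[R] (Fin d → U)) ≃ (Fin d → (X →ₗ[R] U)) where
  toFun f i := (LinearMap.proj i) ∘ₗ f
  invFun g := LinearMap.pi g
  left_inv f := by apply LinearMap.ext; intro x; rfl
  right_inv g := by funext i; apply LinearMap.ext; intro x; rfl

private def homCongrRight {X A B : Type*} [AddCommGroup X] [Module R X] [AddCommGroup A]
    [Module R A] [AddCommGroup B] [Module R B] (e : A ≃ₗ[R] B) :
    (X →ₗ[R] A) ≃ (X →ₗ[R] B) where
  toFun f := e.toLinearMap ∘ₗ f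
  invFun f := e.symm.toLinearMap ∘ₗ f
  left_inv f := by apply LinearMap.ext; intro x; simp
  right_inv f := by apply LinearMap.ext; intro x; simp

private lemma nonempty_linearEquiv_of_pi_equiv {U V : Type uv} [AddCommGroup U] [Module R U]
    [AddCommGroup V] [Module R V] [Finite U] [Finite V] {d : ℕ} (hd : d ≠ 0)
    (e : (Fin d → U) ≃ₗ[R] (Fin d → V)) : Nonempty (U ≃ₗ[R] V) := by
  have hh : ∀ (X : Type uv) [AddCommGroup X] [Module R X] [Finite X],
      Nat.card (X →ₗ[R] U) = Nat.card (X →ₗ[R] V) := by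
    intro X _ _ _
    apply Nat.pow_left_injective hd
    show Nat.card (X →ₗ[R] U) ^ d = Nat.card (X →ₗ[R] V) ^ d
    have c1 : Nat.card (X →ₗ[R] (Fin d → U)) = Nat.card (X →ₗ[R] U) ^ d := by
      rw [Nat.card_congr (homPiEquiv X d U), Nat.card_pi, Finset.prod_const,
        Finset.card_univ, Fintype.card_fin]
    have c2 : Nat.card (X →ₗ[R] (Fin d → V)) = Nat.card (X →ₗ[R] V) ^ d := by
      rw [Nat.card_congr (homPiEquiv X d V), Nat.card_pi, Finset.prod_const,
        Finset.card_univ, Fintype.card_fin]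
    rw [← c1, ← c2, Nat.card_congr (homCongrRight e)]
  have hinj := injCard_eq_of_homCard_eq (R := R) hh
  haveI := finite_linearMap (R := R) U U
  haveI := finite_linearMap (R := R) U V
  haveI := finite_linearMap (R := R) V U
  haveI := finite_linearMap (R := R) V V
  have hUV : 0 < injCard R U V := by
    rw [← hinj U]
    have : Nonempty {f : U →ₗ[R] U // Function.Injective f} :=
      ⟨⟨LinearMap.id, fun a b h => h⟩⟩
    exact Nat.card_pos
  have hVU : 0 < injCard R V U := by
    rw [hinj V]
    have : Nonempty {f : V →ₗ[R] V // Function.Injective f} :=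
      ⟨⟨LinearMap.id, fun a b h => h⟩⟩
    exact Nat.card_pos
  obtain ⟨f, hf⟩ := (Nat.card_pos_iff.mp hUV).1.some
  obtain ⟨g, hg⟩ := (Nat.card_pos_iff.mp hVU).1.some
  haveI : Fintype U := Fintype.ofFinite U
  haveI : Fintype V := Fintype.ofFinite V
  have hcard : Fintype.card U = Fintype.card V :=
    le_antisymm (Fintype.card_le_of_injective f hf) (Fintype.card_le_of_injective g hg)
  have hbij : Function.Bijective f :=
    (Fintype.bijective_iff_injective_and_card f).mpr ⟨hf, hcard⟩
  exact ⟨LinearEquiv.ofBijective f hbij⟩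

end Counting



section ConjProj

variable {T : Type*} [Ring T]

private def conjProj (p r : T) : T := (1 - p) * r * p + p * r * (1 - p)

private lemma conjProj_zero (p : T) : conjProj p 0 = 0 := by simp [conjProj]

private lemma conjProj_add (p : T) (r s : T) :
    conjProj p (r + s) = conjProj p r + conjProj p s := by
  simp only [conjProj, mul_add, add_mul]
  abel

private lemma conjProj_sum {ι : Type*} (p : T) (s : Finset ι) (f : ι → T) :
    conjProj p (∑ i ∈ s, f i) = ∑ i ∈ s, conjProj p (f i) := by
  induction s using Finset.cons_induction with
  | empty => simp [conjProj_zero]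
  | cons a s ha ih => rw [Finset.sum_cons, Finset.sum_cons, conjProj_add, ih]

private lemma conjProj_smul {S : Type*} [Monoid S] [DistribMulAction S T] [SMulCommClass S T T]
    [IsScalarTower S T T] (p : T) (c : S) (r : T) :
    conjProj p (c • r) = c • conjProj p r := by
  simp only [conjProj, mul_smul_comm, smul_mul_assoc, smul_add]


private lemma one_sub_mul_self {p : T} (hp : p * p = p) : (1 - p) * (1 - p) = 1 - p := by
  simp [mul_sub, sub_mul, hp]

private lemma one_sub_mul_cancel {p : T} (hp : p * p = p) : (1 - p) * p = 0 := by
  simp [sub_mul, hp]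

private lemma mul_one_sub_cancel {p : T} (hp : p * p = p) : p * (1 - p) = 0 := by
  simp [mul_sub, hp]

private lemma conjProj_spec {p : T} (hp : p * p = p) (r : T) :
    conjProj p r * p = (1 - p) * conjProj p r := by
  have h1 : (1 - p) * r * p * p = (1 - p) * r * p := by
    rw [mul_assoc ((1 - p) * r) p p, hp]
  have h2 : p * r * (1 - p) * p = 0 := by
    rw [mul_assoc (p * r) (1 - p) p, one_sub_mul_cancel hp, mul_zero]
  have h3 : (1 - p) * ((1 - p) * r * p) = (1 - p) * r * p := by
    rw [← mul_assoc, ← mul_assoc, one_sub_mul_self hp]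
  have h4 : (1 - p) * (p * r * (1 - p)) = 0 := by
    rw [← mul_assoc, ← mul_assoc, one_sub_mul_cancel hp, zero_mul, zero_mul]
  rw [conjProj, add_mul, h1, h2, add_zero, mul_add, h3, h4, add_zero]

private lemma conjProj_fixed {p r : T} (hp : p * p = p) (hr : r * p = (1 - p) * r) :
    conjProj p r = r := by
  have h1 : (1 - p) * r * p = (1 - p) * r := by
    rw [mul_assoc, hr, ← mul_assoc, one_sub_mul_self hp]
  have hpr : p * r = r - r * p := by
    have : p * r = r - (1 - p) * r := by rw [sub_mul, one_mul, sub_sub_cancel]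
    rw [this, hr]
  have h2 : p * r * (1 - p) = r - r * p := by
    rw [hpr, sub_mul, mul_sub, mul_sub, mul_one, mul_one, mul_assoc, hp]
    abel
  rw [conjProj, h1, h2, ← hr]
  abel


end ConjProj

section PolyDescent

open TensorProduct

variable {K : Type*} [Field K] {R : Type*} [Ring R] [Algebra K R]
variable {n : ℕ}

private noncomputable def cmat (b : Module.Basis (Fin n) K R) (p : R) (k : Fin n) :
    Matrix (Fin n) (Fin n) K :=
  LinearMap.toMatrix b b (LinearMap.mulLeft K (conjProj p (b k)))

private noncomputable def polyP (b : Module.Basis (Fin n) K R) (p : R) : MvPolynomial (Fin n) K :=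
  Matrix.det (Matrix.of fun i j =>
    ∑ k, MvPolynomial.X k * MvPolynomial.C (cmat b p k i j))

variable {J : Type*} [Field J] [Algebra K J]

private lemma one_sub_one_tmul (p : R) :
    (1 : J ⊗[K] R) - 1 ⊗ₜ[K] p = 1 ⊗ₜ[K] (1 - p) := by
  rw [Algebra.TensorProduct.one_def, ← TensorProduct.tmul_sub]

private lemma conjProj_one_tmul (p r : R) :
    conjProj ((1 : J) ⊗ₜ[K] p) ((1 : J) ⊗ₜ[K] r) = (1 : J) ⊗ₜ[K] conjProj p r := by
  simp only [conjProj, one_sub_one_tmul, Algebra.TensorProduct.tmul_mul_tmul, one_mul,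
    TensorProduct.tmul_add]

private lemma aeval_polyP (b : Module.Basis (Fin n) K R) (p : R) (c : Fin n → J) :
    MvPolynomial.aeval c (polyP b p) =
      Matrix.det (LinearMap.toMatrix (b.baseChange J) (b.baseChange J)
        (LinearMap.mulLeft J
          (conjProj ((1 : J) ⊗ₜ[K] p) (∑ k, c k • ((1 : J) ⊗ₜ[K] b k))))) := by
  rw [polyP, AlgHom.map_det]
  congr 1
  apply Matrix.ext
  intro i j
  have lhs : (MvPolynomial.aeval c) (∑ k, MvPolynomial.X k * MvPolynomial.C (cmat b p k i j))
      = ∑ k, c k * algebraMap K J (cmat b p k i j) := by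
    simp [MvPolynomial.algebraMap_eq]
  have hproj : conjProj ((1 : J) ⊗ₜ[K] p) (∑ k, c k • ((1 : J) ⊗ₜ[K] b k))
      = ∑ k, c k • ((1 : J) ⊗ₜ[K] conjProj p (b k)) := by
    rw [conjProj_sum]
    refine Finset.sum_congr rfl fun k _ => ?_
    rw [conjProj_smul, conjProj_one_tmul]
  have happ : LinearMap.mulLeft J
        (conjProj ((1 : J) ⊗ₜ[K] p) (∑ k, c k • ((1 : J) ⊗ₜ[K] b k)))
        ((b.baseChange J) j)
      = ∑ k, c k • ((1 : J) ⊗ₜ[K] (conjProj p (b k) * b j)) := by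
    rw [Module.Basis.baseChange_apply, LinearMap.mulLeft_apply, hproj, Finset.sum_mul]
    refine Finset.sum_congr rfl fun k _ => ?_
    rw [smul_mul_assoc, Algebra.TensorProduct.tmul_mul_tmul, one_mul]
  rw [AlgHom.mapMatrix_apply, Matrix.map_apply, Matrix.of_apply, lhs,
    LinearMap.toMatrix_apply, happ, map_sum, Finsupp.finset_sum_apply]
  refine Finset.sum_congr rfl fun k _ => ?_
  rw [map_smul, Finsupp.smul_apply, Module.Basis.baseChange_repr_tmul, cmat, LinearMap.toMatrix_apply,
    LinearMap.mulLeft_apply, smul_eq_mul, ← Algebra.algebraMap_eq_smul_one]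


private lemma tmul_idem {p : R} (hp : p * p = p) :
    ((1 : J) ⊗ₜ[K] p) * ((1 : J) ⊗ₜ[K] p) = (1 : J) ⊗ₜ[K] p := by
  rw [Algebra.TensorProduct.tmul_mul_tmul, one_mul, hp]

private lemma polyP_ne_zero (b : Module.Basis (Fin n) K R) {p : R} (hp : p * p = p)
    (u : (J ⊗[K] R)ˣ)
    (hu : (u : J ⊗[K] R) * ((1 : J) ⊗ₜ[K] p) = ((1 : J) ⊗ₜ[K] (1 - p)) * (u : J ⊗[K] R)) :
    polyP b p ≠ 0 := by
  set bJ := b.baseChange J with hbJ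
  set c : Fin n → J := fun k => bJ.repr (u : J ⊗[K] R) k with hc
  have hsum : ∑ k, c k • ((1 : J) ⊗ₜ[K] b k) = (u : J ⊗[K] R) := by
    conv_rhs => rw [← bJ.sum_repr (u : J ⊗[K] R)]
    refine Finset.sum_congr rfl fun k _ => ?_
    rw [hbJ, Module.Basis.baseChange_apply]
  have hfix : conjProj ((1 : J) ⊗ₜ[K] p) (u : J ⊗[K] R) = (u : J ⊗[K] R) := by
    apply conjProj_fixed (tmul_idem hp)
    rw [one_sub_one_tmul]
    exact hu
  have key := aeval_polyP b p c
  rw [hsum, hfix] at key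
  intro h0
  rw [h0, map_zero] at key
  have hdet : Matrix.det (LinearMap.toMatrix bJ bJ (LinearMap.mulLeft J (u : J ⊗[K] R))) *
      Matrix.det (LinearMap.toMatrix bJ bJ (LinearMap.mulLeft J ((u⁻¹ : (J ⊗[K] R)ˣ) : J ⊗[K] R)))
      = 1 := by
    rw [← Matrix.det_mul, ← LinearMap.toMatrix_comp bJ bJ bJ, ← LinearMap.mulLeft_mul,
      Units.mul_inv, LinearMap.mulLeft_one, LinearMap.toMatrix_id, Matrix.det_one]
  rw [← key, zero_mul] at hdet
  exact zero_ne_one hdet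

private lemma exists_unit_of_aeval_ne_zero (b : Module.Basis (Fin n) K R) {p : R} (hp : p * p = p)
    {c : Fin n → J} (hc : MvPolynomial.aeval c (polyP b p) ≠ 0) :
    ∃ w : (J ⊗[K] R)ˣ, (w : J ⊗[K] R) * ((1 : J) ⊗ₜ[K] p)
      = ((1 : J) ⊗ₜ[K] (1 - p)) * (w : J ⊗[K] R) := by
  set w0 := conjProj ((1 : J) ⊗ₜ[K] p) (∑ k, c k • ((1 : J) ⊗ₜ[K] b k)) with hw0
  have key := aeval_polyP b p c
  rw [key] at hc
  have hunit : IsUnit (LinearMap.toMatrix (b.baseChange J) (b.baseChange J)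
      (LinearMap.mulLeft J w0)).det := isUnit_iff_ne_zero.mpr hc
  let e := LinearEquiv.ofIsUnitDet hunit
  have he : ∀ x, e x = w0 * x := fun x => by
    show (e : J ⊗[K] R →ₗ[J] J ⊗[K] R) x = w0 * x
    rw [LinearEquiv.coe_ofIsUnitDet]
    rfl
  obtain ⟨t, ht⟩ : ∃ t, w0 * t = 1 := ⟨e.symm 1, by rw [← he, e.apply_symm_apply]⟩
  have ht2 : t * w0 = 1 := by
    apply e.injective
    rw [he, he, ← mul_assoc, ht, one_mul, mul_one]
  refine ⟨⟨w0, t, ht, ht2⟩, ?_⟩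
  show w0 * ((1 : J) ⊗ₜ[K] p) = ((1 : J) ⊗ₜ[K] (1 - p)) * w0
  rw [← one_sub_one_tmul]
  exact conjProj_spec (tmul_idem hp) _

end PolyDescent




section UnitFromCorner

variable {T : Type*} [Ring T]

private lemma unit_conj_of_corner {p x y : T}
    (hpx : p * x = x) (hxq : x * (1 - p) = x) (hqy : (1 - p) * y = y) (hyp : y * p = y)
    (hxy : x * y = p) (hyx : y * x = 1 - p) :
    ∃ v : Tˣ, (v : T) * p = (1 - p) * (v : T) := by
  have hxp : x * p = 0 := by
    have h := hxq; rw [mul_sub, mul_one, sub_eq_self] at h; exact h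
  have hpy : p * y = 0 := by
    have h := hqy; rw [sub_mul, one_mul, sub_eq_self] at h; exact h
  have hqx : (1 - p) * x = 0 := by
    rw [sub_mul, one_mul, hpx, sub_self]
  have hyq : y * (1 - p) = 0 := by
    rw [mul_sub, mul_one, hyp, sub_self]
  have hxx : x * x = 0 := by
    have h : x * x = (x * (1 - p)) * x := by rw [hxq]
    rw [h, mul_assoc, hqx, mul_zero]
  have hyy : y * y = 0 := by
    have h : y * y = (y * p) * y := by rw [hyp]
    rw [h, mul_assoc, hpy, mul_zero]
  have huu : (x + y) * (x + y) = 1 := by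
    rw [add_mul, mul_add, mul_add, hxx, hxy, hyx, hyy, zero_add, add_zero]
    abel
  refine ⟨⟨x + y, x + y, huu, huu⟩, ?_⟩
  show (x + y) * p = (1 - p) * (x + y)
  rw [add_mul, hxp, zero_add, hyp, mul_add, hqx, zero_add, hqy]

end UnitFromCorner


section FiniteCase

open TensorProduct

variable {K : Type*} [Field K] {R : Type*} [Ring R] [Algebra K R]
variable {K' : Type*} [Field K'] [Algebra K K']

private lemma rsmul_mul (r : R) (x y : R ⊗[K] K') : (r • x) * y = r • (x * y) := by
  induction x with
  | zero => rw [smul_zero, zero_mul, smul_zero]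
  | tmul a b =>
    rw [TensorProduct.smul_tmul']
    induction y with
    | zero => rw [mul_zero, mul_zero, smul_zero]
    | tmul c d => rw [Algebra.TensorProduct.tmul_mul_tmul, Algebra.TensorProduct.tmul_mul_tmul,
        TensorProduct.smul_tmul', smul_eq_mul, smul_eq_mul, mul_assoc]
    | add y1 y2 h1 h2 => rw [mul_add, mul_add, h1, h2, smul_add]
  | add x1 x2 h1 h2 => rw [smul_add, add_mul, add_mul, h1, h2, smul_add]

private def fixSub (p : R) : Submodule R R where
  carrier := {a | a * p = a}
  add_mem' := fun {a b} ha hb => by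
    simp only [Set.mem_setOf_eq] at *
    rw [add_mul, ha, hb]
  zero_mem' := zero_mul p
  smul_mem' := fun r a ha => by
    simp only [Set.mem_setOf_eq, smul_eq_mul] at *
    rw [mul_assoc, ha]

private def fixSubT (p : R) : Submodule R (R ⊗[K] K') where
  carrier := {x | x * (p ⊗ₜ[K] (1 : K')) = x}
  add_mem' := fun {a b} ha hb => by
    simp only [Set.mem_setOf_eq] at *
    rw [add_mul, ha, hb]
  zero_mem' := zero_mul _
  smul_mem' := fun r a ha => by
    simp only [Set.mem_setOf_eq] at *
    rw [rsmul_mul, ha]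

private lemma mem_fixSub {p a : R} : a ∈ fixSub p ↔ a * p = a := Iff.rfl

private lemma mem_fixSubT {p : R} {x : R ⊗[K] K'} :
    x ∈ fixSubT (K := K) (K' := K') p ↔ x * (p ⊗ₜ[K] (1 : K')) = x := Iff.rfl

private noncomputable def conjMap {p q' : R} (z : R ⊗[K] K')
    (hz : ∀ x : R ⊗[K] K', x * (p ⊗ₜ[K] (1 : K')) = x →
      (x * z) * (q' ⊗ₜ[K] (1 : K')) = x * z) :
    fixSubT (K := K) (K' := K') p →ₗ[R] fixSubT (K := K) (K' := K') q' where
  toFun x := ⟨(x : R ⊗[K] K') * z, hz x (mem_fixSubT.mp x.2)⟩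
  map_add' a b := Subtype.ext (by
    show ((a : R ⊗[K] K') + b) * z = (a : R ⊗[K] K') * z + (b : R ⊗[K] K') * z
    rw [add_mul])
  map_smul' r a := Subtype.ext (by
    show (r • (a : R ⊗[K] K')) * z = r • ((a : R ⊗[K] K') * z)
    rw [rsmul_mul])

private noncomputable def conjEquiv {p : R} (w : (R ⊗[K] K')ˣ)
    (hw : (w : R ⊗[K] K') * (p ⊗ₜ[K] (1 : K'))
      = ((1 - p) ⊗ₜ[K] (1 : K')) * (w : R ⊗[K] K')) :
    (fixSubT (K := K) (K' := K') p) ≃ₗ[R] (fixSubT (K := K) (K' := K') (1 - p)) := by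
  have h1 : (p ⊗ₜ[K] (1 : K')) * ((w⁻¹ : (R ⊗[K] K')ˣ) : R ⊗[K] K')
      = ((w⁻¹ : (R ⊗[K] K')ˣ) : R ⊗[K] K') * ((1 - p) ⊗ₜ[K] (1 : K')) := by
    calc (p ⊗ₜ[K] (1 : K')) * ((w⁻¹ : (R ⊗[K] K')ˣ) : R ⊗[K] K')
        = ((w⁻¹ : (R ⊗[K] K')ˣ) : R ⊗[K] K')
            * (((w : R ⊗[K] K') * (p ⊗ₜ[K] (1 : K')))
            * ((w⁻¹ : (R ⊗[K] K')ˣ) : R ⊗[K] K')) := by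
          rw [← mul_assoc, ← mul_assoc, Units.inv_mul, one_mul]
      _ = ((w⁻¹ : (R ⊗[K] K')ˣ) : R ⊗[K] K')
            * ((((1 - p) ⊗ₜ[K] (1 : K')) * (w : R ⊗[K] K'))
            * ((w⁻¹ : (R ⊗[K] K')ˣ) : R ⊗[K] K')) := by rw [hw]
      _ = ((w⁻¹ : (R ⊗[K] K')ˣ) : R ⊗[K] K') * ((1 - p) ⊗ₜ[K] (1 : K')) := by
          rw [mul_assoc ((1 - p) ⊗ₜ[K] (1 : K')), Units.mul_inv, mul_one]
  refine LinearEquiv.ofLinear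
    (conjMap (q' := 1 - p) ((w⁻¹ : (R ⊗[K] K')ˣ) : R ⊗[K] K') ?_)
    (conjMap (q' := p) (w : R ⊗[K] K') ?_) ?_ ?_
  · intro x hx
    rw [mul_assoc, ← h1, ← mul_assoc, hx]
  · intro y hy
    rw [mul_assoc, hw, ← mul_assoc, hy]
  · apply LinearMap.ext
    intro y
    apply Subtype.ext
    show ((y : R ⊗[K] K') * (w : R ⊗[K] K'))
        * ((w⁻¹ : (R ⊗[K] K')ˣ) : R ⊗[K] K') = (y : R ⊗[K] K')
    rw [mul_assoc, Units.mul_inv, mul_one]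
  · apply LinearMap.ext
    intro x
    apply Subtype.ext
    show ((x : R ⊗[K] K') * ((w⁻¹ : (R ⊗[K] K')ˣ) : R ⊗[K] K'))
        * (w : R ⊗[K] K') = (x : R ⊗[K] K')
    rw [mul_assoc, Units.inv_mul, mul_one]

variable {d : ℕ}

private noncomputable def psiCoord (b : Module.Basis (Fin d) K K') (i : Fin d) :
    (R ⊗[K] K') →ₗ[K] R :=
  TensorProduct.lift (LinearMap.mk₂ K (fun a lam => b.repr lam i • a)
    (fun a a' lam => smul_add _ a a')
    (fun c a lam => smul_comm _ c a)
    (fun a lam lam' => by (try dsimp only); rw [map_add, Finsupp.add_apply, add_smul])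
    (fun c a lam => by (try dsimp only); rw [map_smul, Finsupp.smul_apply, smul_eq_mul, mul_smul]))

private lemma psiCoord_tmul (b : Module.Basis (Fin d) K K') (i : Fin d) (a : R) (lam : K') :
    psiCoord b i (a ⊗ₜ[K] lam) = b.repr lam i • a := rfl

private lemma sum_psiCoord (b : Module.Basis (Fin d) K K') (t : R ⊗[K] K') :
    ∑ i, (psiCoord b i t) ⊗ₜ[K] b i = t := by
  induction t with
  | zero => simp
  | tmul a lam =>
    simp only [psiCoord_tmul]
    calc ∑ i, (b.repr lam i • a) ⊗ₜ[K] b i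
        = ∑ i, a ⊗ₜ[K] (b.repr lam i • b i) := by
          refine Finset.sum_congr rfl fun i _ => ?_
          rw [TensorProduct.smul_tmul]
      _ = a ⊗ₜ[K] (∑ i, b.repr lam i • b i) := by rw [TensorProduct.tmul_sum]
      _ = a ⊗ₜ[K] lam := by rw [b.sum_repr lam]
  | add t1 t2 h1 h2 =>
    simp only [map_add]
    conv_rhs => rw [← h1, ← h2]
    rw [← Finset.sum_add_distrib]
    refine Finset.sum_congr rfl fun i _ => ?_
    rw [TensorProduct.add_tmul]

private lemma psiCoord_sum_basis (b : Module.Basis (Fin d) K K') (a : Fin d → R) (j : Fin d) :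
    psiCoord b j (∑ i, a i ⊗ₜ[K] b i) = a j := by
  rw [map_sum]
  simp only [psiCoord_tmul, Module.Basis.repr_self, Finsupp.single_apply, ite_smul, one_smul,
    zero_smul]
  simp [Finset.sum_ite_eq]

private noncomputable def piToFix (b : Module.Basis (Fin d) K K') (p : R) :
    (Fin d → fixSub p) →ₗ[R] fixSubT (K := K) (K' := K') p where
  toFun g := ⟨∑ i, ((g i : R) ⊗ₜ[K] b i), by
    rw [mem_fixSubT, Finset.sum_mul]
    refine Finset.sum_congr rfl fun i _ => ?_
    rw [Algebra.TensorProduct.tmul_mul_tmul, mul_one, mem_fixSub.mp (g i).2]⟩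
  map_add' g h := Subtype.ext (by
    show ∑ i, ((((g i : R) + (h i : R))) ⊗ₜ[K] b i)
        = ∑ i, ((g i : R) ⊗ₜ[K] b i) + ∑ i, ((h i : R) ⊗ₜ[K] b i)
    rw [← Finset.sum_add_distrib]
    refine Finset.sum_congr rfl fun i _ => ?_
    rw [TensorProduct.add_tmul])
  map_smul' r g := Subtype.ext (by
    show ∑ i, ((r * (g i : R)) ⊗ₜ[K] b i) = r • ∑ i, ((g i : R) ⊗ₜ[K] b i)
    rw [Finset.smul_sum]
    refine Finset.sum_congr rfl fun i _ => ?_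
    rw [TensorProduct.smul_tmul', smul_eq_mul])

private lemma piToFix_bijective (b : Module.Basis (Fin d) K K') {p : R} (hp : p * p = p) :
    Function.Bijective (piToFix (K' := K') b p) := by
  constructor
  · intro g h hgh
    have hv : (∑ i, ((g i : R) ⊗ₜ[K] b i)) = ∑ i, ((h i : R) ⊗ₜ[K] b i) :=
      congrArg Subtype.val hgh
    funext i
    apply Subtype.ext
    have h1 := congrArg (psiCoord b i) hv
    rwa [psiCoord_sum_basis, psiCoord_sum_basis] at h1
  · intro x
    refine ⟨fun i => ⟨psiCoord b i (x : R ⊗[K] K') * p, by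
      rw [mem_fixSub, mul_assoc, hp]⟩, ?_⟩
    apply Subtype.ext
    show ∑ i, ((psiCoord b i (x : R ⊗[K] K') * p) ⊗ₜ[K] b i) = (x : R ⊗[K] K')
    calc ∑ i, ((psiCoord b i (x : R ⊗[K] K') * p) ⊗ₜ[K] b i)
        = ∑ i, ((psiCoord b i (x : R ⊗[K] K') ⊗ₜ[K] b i) * (p ⊗ₜ[K] (1 : K'))) := by
          refine Finset.sum_congr rfl fun i _ => ?_
          rw [Algebra.TensorProduct.tmul_mul_tmul, mul_one]
      _ = (∑ i, psiCoord b i (x : R ⊗[K] K') ⊗ₜ[K] b i) * (p ⊗ₜ[K] (1 : K')) := by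
          rw [Finset.sum_mul]
      _ = (x : R ⊗[K] K') * (p ⊗ₜ[K] (1 : K')) := by rw [sum_psiCoord]
      _ = (x : R ⊗[K] K') := mem_fixSubT.mp x.2

private lemma exists_conj_unit_of_finiteK [Finite K] [FiniteDimensional K R]
    [FiniteDimensional K K'] {p : R} (hp : p * p = p) (w : (K' ⊗[K] R)ˣ)
    (hw : (w : K' ⊗[K] R) * ((1 : K') ⊗ₜ[K] p)
      = ((1 : K') ⊗ₜ[K] (1 - p)) * (w : K' ⊗[K] R)) :
    ∃ v : Rˣ, (v : R) * p = (1 - p) * (v : R) := by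
  classical
  let e : K' ⊗[K] R ≃ₐ[K] R ⊗[K] K' := Algebra.TensorProduct.comm K K' R
  let w' : (R ⊗[K] K')ˣ := Units.map (e.toAlgHom.toRingHom.toMonoidHom) w
  have hw' : (w' : R ⊗[K] K') * (p ⊗ₜ[K] (1 : K'))
      = ((1 - p) ⊗ₜ[K] (1 : K')) * (w' : R ⊗[K] K') := by
    have h2 := congrArg e hw
    rw [map_mul, map_mul] at h2
    simpa [e, w', Algebra.TensorProduct.comm_tmul] using h2
  let b := Module.finBasis K K'
  have hd : Module.finrank K K' ≠ 0 := (Module.finrank_pos (R := K) (M := K')).ne'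
  have e2p := LinearEquiv.ofBijective (piToFix (K := K) (K' := K') b p)
    (piToFix_bijective b hp)
  have hq : (1 - p) * (1 - p) = 1 - p := one_sub_mul_self hp
  have e2q := LinearEquiv.ofBijective (piToFix (K := K) (K' := K') b (1 - p))
    (piToFix_bijective b hq)
  have e1 := conjEquiv (K := K) (K' := K') w' hw'
  haveI : Finite R := Module.finite_of_finite K
  obtain ⟨eUV⟩ := nonempty_linearEquiv_of_pi_equiv hd (e2p.trans (e1.trans e2q.symm))
  let z0 : fixSub p := ⟨p, show p * p = p from hp⟩
  let z1 : fixSub (1 - p) := ⟨1 - p, show (1 - p) * (1 - p) = 1 - p from hq⟩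
  set x := ((eUV z0 : fixSub (1 - p)) : R) with hxdef
  set y := ((eUV.symm z1 : fixSub p) : R) with hydef
  have hx2 : x * (1 - p) = x := mem_fixSub.mp (eUV z0).2
  have hy2 : y * p = y := mem_fixSub.mp (eUV.symm z1).2
  have hpx : p * x = x := by
    have hz : p • z0 = z0 := Subtype.ext (by show p * p = p; exact hp)
    have h3 := congrArg eUV hz
    rw [map_smul] at h3
    have h4 := congrArg Subtype.val h3
    simpa [smul_eq_mul] using h4
  have hqy : (1 - p) * y = y := by
    have hz : (1 - p) • z1 = z1 := Subtype.ext (by show (1 - p) * (1 - p) = 1 - p; exact hq)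
    have h3 := congrArg eUV.symm hz
    rw [map_smul] at h3
    have h4 := congrArg Subtype.val h3
    simpa [smul_eq_mul] using h4
  have hyx : y * x = 1 - p := by
    have hz : y • z0 = eUV.symm z1 := Subtype.ext (by show y * p = y; exact hy2)
    have h3 := congrArg eUV hz
    rw [map_smul, eUV.apply_symm_apply] at h3
    have h4 := congrArg Subtype.val h3
    simp only [SetLike.val_smul, smul_eq_mul] at h4
    rw [hxdef]
    exact h4
  have hxy : x * y = p := by
    have hz : x • z1 = eUV z0 := Subtype.ext (by show x * (1 - p) = x; exact hx2)
    have h3 := congrArg eUV.symm hz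
    rw [map_smul, eUV.symm_apply_apply] at h3
    have h4 := congrArg Subtype.val h3
    simp only [SetLike.val_smul, smul_eq_mul] at h4
    rw [hydef]
    exact h4
  exact unit_conj_of_corner hpx hx2 hqy hy2 hxy hyx

end FiniteCase

section Core

open TensorProduct

private lemma exists_conj_unit {K : Type*} [Field K] {R : Type*} [Ring R] [Algebra K R]
    [FiniteDimensional K R] {L : Type*} [Field L] [Algebra K L] {p : R} (hp : p * p = p)
    (u : (L ⊗[K] R)ˣ)
    (hu : (u : L ⊗[K] R) * ((1 : L) ⊗ₜ[K] p)
      = ((1 : L) ⊗ₜ[K] (1 - p)) * (u : L ⊗[K] R)) :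
    ∃ v : Rˣ, (v : R) * p = (1 - p) * (v : R) := by
  classical
  set n := Module.finrank K R with hn
  set b : Module.Basis (Fin n) K R := Module.finBasis K R with hb
  have hP : polyP b p ≠ 0 := polyP_ne_zero b hp u hu
  cases finite_or_infinite K with
  | inr hinf =>
    obtain ⟨c, hc⟩ : ∃ c : Fin n → K, MvPolynomial.eval c (polyP b p) ≠ 0 := by
      by_contra hav
      push_neg at hav
      exact hP (MvPolynomial.funext fun x => by rw [hav x, map_zero])
    have hc' : MvPolynomial.aeval c (polyP b p) ≠ 0 := by
      rwa [MvPolynomial.aeval_def, MvPolynomial.eval₂_eq_eval_map, Algebra.algebraMap_self, MvPolynomial.map_id]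
    obtain ⟨w, hw⟩ := exists_unit_of_aeval_ne_zero (J := K) b hp hc'
    let e : K ⊗[K] R ≃ₐ[K] R := Algebra.TensorProduct.lid K R
    refine ⟨Units.map e.toAlgHom.toRingHom.toMonoidHom w, ?_⟩
    have h2 := congrArg e hw
    rw [map_mul, map_mul] at h2
    simpa [e] using h2
  | inl hfin =>
    set Kb := AlgebraicClosure K with hKb
    have hPb : MvPolynomial.map (algebraMap K Kb) (polyP b p) ≠ 0 := by
      intro h0
      exact hP (MvPolynomial.map_injective _ (algebraMap K Kb).injective
        (h0.trans (map_zero _).symm))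
    obtain ⟨c, hc⟩ : ∃ c : Fin n → Kb,
        MvPolynomial.eval c (MvPolynomial.map (algebraMap K Kb) (polyP b p)) ≠ 0 := by
      by_contra hav
      push_neg at hav
      exact hPb (MvPolynomial.funext fun x => by rw [hav x, map_zero])
    have hcae : MvPolynomial.aeval c (polyP b p) ≠ 0 := by
      rwa [MvPolynomial.aeval_def, MvPolynomial.eval₂_eq_eval_map]
    haveI : Finite (Set.range c) := (Set.finite_range c).to_subtype
    set K' := IntermediateField.adjoin K (Set.range c) with hK'
    haveI : FiniteDimensional K K' := IntermediateField.finiteDimensional_adjoin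
      (fun x _ => IsAlgebraic.isIntegral (Algebra.IsAlgebraic.isAlgebraic x))
    let c' : Fin n → K' := fun k => ⟨c k, IntermediateField.subset_adjoin K _ ⟨k, rfl⟩⟩
    have hc' : MvPolynomial.aeval c' (polyP b p) ≠ 0 := by
      intro h0
      apply hcae
      have h3 := MvPolynomial.comp_aeval_apply (f := c') (IsScalarTower.toAlgHom K K' Kb) (polyP b p)
      rw [h0, map_zero] at h3
      have h4 : (fun i => (IsScalarTower.toAlgHom K (↥K') Kb) (c' i)) = c := by
        funext i; rfl
      rw [h4] at h3
      exact h3.symm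
    obtain ⟨w, hw⟩ := exists_unit_of_aeval_ne_zero (J := K') b hp hc'
    exact exists_conj_unit_of_finiteK hp w hw

end Core


section CatBridge

open CategoryTheory TensorProduct

variable {C : Type u} [Category.{v} C] [Preadditive C]
variable {K : Type ku} [Field K] [CategoryTheory.Linear K C]
variable (N M : C)

private abbrev SqRing := ((N ⟶ N) × (N ⟶ M)) × ((M ⟶ N) × (M ⟶ M))

private def sqMul (r s : SqRing N M) : SqRing N M :=
  ((r.1.1 ≫ s.1.1 + r.1.2 ≫ s.2.1, r.1.1 ≫ s.1.2 + r.1.2 ≫ s.2.2),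
   (r.2.1 ≫ s.1.1 + r.2.2 ≫ s.2.1, r.2.1 ≫ s.1.2 + r.2.2 ≫ s.2.2))

private instance : Ring (SqRing N M) :=
  { (inferInstance : AddCommGroup (SqRing N M)) with
    mul := sqMul N M
    one := ((𝟙 N, 0), (0, 𝟙 M))
    mul_assoc := by
      intro a b c
      show sqMul N M (sqMul N M a b) c = sqMul N M a (sqMul N M b c)
      refine Prod.ext (Prod.ext ?_ ?_) (Prod.ext ?_ ?_) <;>
        simp [sqMul, Preadditive.add_comp, Preadditive.comp_add, Category.assoc] <;> abel
    one_mul := by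
      intro a
      show sqMul N M ((𝟙 N, 0), (0, 𝟙 M)) a = a
      refine Prod.ext (Prod.ext ?_ ?_) (Prod.ext ?_ ?_) <;> simp [sqMul]
    mul_one := by
      intro a
      show sqMul N M a ((𝟙 N, 0), (0, 𝟙 M)) = a
      refine Prod.ext (Prod.ext ?_ ?_) (Prod.ext ?_ ?_) <;> simp [sqMul]
    left_distrib := by
      intro a b c
      show sqMul N M a (b + c) = sqMul N M a b + sqMul N M a c
      refine Prod.ext (Prod.ext ?_ ?_) (Prod.ext ?_ ?_) <;>
        simp [sqMul, Preadditive.comp_add] <;> abel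
    right_distrib := by
      intro a b c
      show sqMul N M (a + b) c = sqMul N M a c + sqMul N M b c
      refine Prod.ext (Prod.ext ?_ ?_) (Prod.ext ?_ ?_) <;>
        simp [sqMul, Preadditive.add_comp] <;> abel
    zero_mul := by
      intro a
      show sqMul N M 0 a = 0
      refine Prod.ext (Prod.ext ?_ ?_) (Prod.ext ?_ ?_) <;> simp [sqMul]
    mul_zero := by
      intro a
      show sqMul N M a 0 = 0
      refine Prod.ext (Prod.ext ?_ ?_) (Prod.ext ?_ ?_) <;> simp [sqMul] }

private lemma sq_mul_def (r s : SqRing N M) : r * s = sqMul N M r s := rfl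

private instance : Algebra K (SqRing N M) :=
  Algebra.ofModule
    (fun k x y => by
      show sqMul N M (k • x) y = k • sqMul N M x y
      refine Prod.ext (Prod.ext ?_ ?_) (Prod.ext ?_ ?_) <;>
        simp [sqMul, CategoryTheory.Linear.smul_comp, smul_add])
    (fun k x y => by
      show sqMul N M x (k • y) = k • sqMul N M x y
      refine Prod.ext (Prod.ext ?_ ?_) (Prod.ext ?_ ?_) <;>
        simp [sqMul, CategoryTheory.Linear.comp_smul, smul_add])

/-- The distinguished idempotent. -/
private def pSq : SqRing N M := ((𝟙 N, 0), (0, 0))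

private lemma pSq_idem : pSq N M * pSq N M = pSq N M := by
  show sqMul N M _ _ = _
  refine Prod.ext (Prod.ext ?_ ?_) (Prod.ext ?_ ?_) <;> simp [sqMul, pSq]

private lemma sq_one_def : (1 : SqRing N M) = ((𝟙 N, 0), (0, 𝟙 M)) := rfl

private lemma one_sub_pSq : (1 : SqRing N M) - pSq N M = ((0, 0), (0, 𝟙 M)) := by
  rw [sq_one_def]
  refine Prod.ext (Prod.ext ?_ ?_) (Prod.ext ?_ ?_) <;> simp [pSq]

private def emNN : (N ⟶ N) →ₗ[K] SqRing N M where
  toFun f := ((f, 0), (0, 0))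
  map_add' a b := by refine Prod.ext (Prod.ext ?_ ?_) (Prod.ext ?_ ?_) <;> simp
  map_smul' k a := by refine Prod.ext (Prod.ext ?_ ?_) (Prod.ext ?_ ?_) <;> simp

private def emNM : (N ⟶ M) →ₗ[K] SqRing N M where
  toFun f := ((0, f), (0, 0))
  map_add' a b := by refine Prod.ext (Prod.ext ?_ ?_) (Prod.ext ?_ ?_) <;> simp
  map_smul' k a := by refine Prod.ext (Prod.ext ?_ ?_) (Prod.ext ?_ ?_) <;> simp

private def emMN : (M ⟶ N) →ₗ[K] SqRing N M where
  toFun f := ((0, 0), (f, 0))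
  map_add' a b := by refine Prod.ext (Prod.ext ?_ ?_) (Prod.ext ?_ ?_) <;> simp
  map_smul' k a := by refine Prod.ext (Prod.ext ?_ ?_) (Prod.ext ?_ ?_) <;> simp

private def emMM : (M ⟶ M) →ₗ[K] SqRing N M where
  toFun f := ((0, 0), (0, f))
  map_add' a b := by refine Prod.ext (Prod.ext ?_ ?_) (Prod.ext ?_ ?_) <;> simp
  map_smul' k a := by refine Prod.ext (Prod.ext ?_ ?_) (Prod.ext ?_ ?_) <;> simp

variable (L : Type rv) [Field L] [Algebra K L]

private noncomputable def jEmb {H : Type v} [AddCommGroup H] [Module K H]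
    (em : H →ₗ[K] SqRing N M) : H ⊗[K] L →ₗ[K] L ⊗[K] SqRing N M :=
  TensorProduct.lift (LinearMap.mk₂ K (fun f lam => lam ⊗ₜ[K] em f)
    (fun f g lam => by (try dsimp only); rw [map_add, TensorProduct.tmul_add])
    (fun c f lam => by (try dsimp only); rw [map_smul, TensorProduct.tmul_smul])
    (fun f lam lam' => by (try dsimp only); rw [TensorProduct.add_tmul])
    (fun c f lam => by (try dsimp only); rw [TensorProduct.smul_tmul']))

private lemma jEmb_tmul {H : Type v} [AddCommGroup H] [Module K H]
    (em : H →ₗ[K] SqRing N M) (f : H) (lam : L) :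
    jEmb N M L em (f ⊗ₜ[K] lam) = lam ⊗ₜ[K] em f := rfl

private lemma jEmb_tensorBil {H1 H2 H3 : Type v}
    [AddCommGroup H1] [Module K H1] [AddCommGroup H2] [Module K H2]
    [AddCommGroup H3] [Module K H3]
    (em1 : H1 →ₗ[K] SqRing N M) (em2 : H2 →ₗ[K] SqRing N M) (em3 : H3 →ₗ[K] SqRing N M)
    (B : H1 →ₗ[K] H2 →ₗ[K] H3) (hcompat : ∀ u v, em3 (B u v) = em1 u * em2 v)
    (α : H1 ⊗[K] L) (β : H2 ⊗[K] L) :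
    jEmb N M L em3 (HermCat.tensorBil K L B α β)
      = jEmb N M L em1 α * jEmb N M L em2 β := by
  induction α with
  | zero => rw [map_zero, LinearMap.zero_apply, map_zero, map_zero, zero_mul]
  | tmul u a =>
    induction β with
    | zero => rw [map_zero, map_zero, map_zero, mul_zero]
    | tmul v b =>
      have hB : HermCat.tensorBil K L B (u ⊗ₜ[K] a) (v ⊗ₜ[K] b) = B u v ⊗ₜ[K] (a * b) := by
        simp [HermCat.tensorBil]
      rw [hB, jEmb_tmul, jEmb_tmul, jEmb_tmul, Algebra.TensorProduct.tmul_mul_tmul, hcompat]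
    | add b1 b2 h1 h2 =>
      rw [map_add, map_add, map_add, mul_add, h1, h2]
  | add a1 a2 h1 h2 =>
    rw [map_add, LinearMap.add_apply, map_add, map_add, add_mul, h1, h2]

private lemma one_tmul_mul_jEmb {H : Type v} [AddCommGroup H] [Module K H]
    (em : H →ₗ[K] SqRing N M) (q0 : SqRing N M) (hq0 : ∀ h, q0 * em h = em h)
    (t : H ⊗[K] L) :
    ((1 : L) ⊗ₜ[K] q0) * jEmb N M L em t = jEmb N M L em t := by
  induction t with
  | zero => rw [map_zero, mul_zero]
  | tmul f lam => rw [jEmb_tmul, Algebra.TensorProduct.tmul_mul_tmul, one_mul, hq0]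
  | add t1 t2 h1 h2 => rw [map_add, mul_add, h1, h2]

private lemma jEmb_mul_one_tmul {H : Type v} [AddCommGroup H] [Module K H]
    (em : H →ₗ[K] SqRing N M) (q0 : SqRing N M) (hq0 : ∀ h, em h * q0 = em h)
    (t : H ⊗[K] L) :
    jEmb N M L em t * ((1 : L) ⊗ₜ[K] q0) = jEmb N M L em t := by
  induction t with
  | zero => rw [map_zero, zero_mul]
  | tmul f lam => rw [jEmb_tmul, Algebra.TensorProduct.tmul_mul_tmul, mul_one, hq0]
  | add t1 t2 h1 h2 => rw [map_add, add_mul, h1, h2]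

end CatBridge

section CornerLemmas

open CategoryTheory

variable {C : Type u} [Category.{v} C] [Preadditive C]
variable {K : Type ku} [Field K] [CategoryTheory.Linear K C]
variable (N M : C)

private lemma pSq_mul (r : SqRing N M) : pSq N M * r = ((r.1.1, r.1.2), (0, 0)) := by
  show sqMul N M _ _ = _
  refine Prod.ext (Prod.ext ?_ ?_) (Prod.ext ?_ ?_) <;> simp [sqMul, pSq]

private lemma mul_pSq (r : SqRing N M) : r * pSq N M = ((r.1.1, 0), (r.2.1, 0)) := by
  show sqMul N M _ _ = _
  refine Prod.ext (Prod.ext ?_ ?_) (Prod.ext ?_ ?_) <;> simp [sqMul, pSq]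

private lemma qSq_mul (r : SqRing N M) :
    (1 - pSq N M) * r = ((0, 0), (r.2.1, r.2.2)) := by
  rw [one_sub_pSq]
  show sqMul N M _ _ = _
  refine Prod.ext (Prod.ext ?_ ?_) (Prod.ext ?_ ?_) <;> simp [sqMul]

private lemma mul_qSq (r : SqRing N M) :
    r * (1 - pSq N M) = ((0, r.1.2), (0, r.2.2)) := by
  rw [one_sub_pSq]
  show sqMul N M _ _ = _
  refine Prod.ext (Prod.ext ?_ ?_) (Prod.ext ?_ ?_) <;> simp [sqMul]

private lemma emNM_corner_left (f : N ⟶ M) : pSq N M * emNM (K := K) N M f = emNM (K := K) N M f := by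
  rw [pSq_mul]; rfl

private lemma emNM_corner_right (f : N ⟶ M) :
    emNM (K := K) N M f * (1 - pSq N M) = emNM (K := K) N M f := by
  rw [mul_qSq]; rfl

private lemma emMN_corner_left (g : M ⟶ N) :
    (1 - pSq N M) * emMN (K := K) N M g = emMN (K := K) N M g := by
  rw [qSq_mul]; rfl

private lemma emMN_corner_right (g : M ⟶ N) : emMN (K := K) N M g * pSq N M = emMN (K := K) N M g := by
  rw [mul_pSq]; rfl

private lemma emNM_mul_emMN (f : N ⟶ M) (g : M ⟶ N) :
    emNM (K := K) N M f * emMN (K := K) N M g = emNN (K := K) N M (f ≫ g) := by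
  show sqMul N M _ _ = _
  refine Prod.ext (Prod.ext ?_ ?_) (Prod.ext ?_ ?_) <;> simp [sqMul, emNN, emNM, emMN]

private lemma emMN_mul_emNM (g : M ⟶ N) (f : N ⟶ M) :
    emMN (K := K) N M g * emNM (K := K) N M f = emMM (K := K) N M (g ≫ f) := by
  show sqMul N M _ _ = _
  refine Prod.ext (Prod.ext ?_ ?_) (Prod.ext ?_ ?_) <;> simp [sqMul, emMM, emNM, emMN]

private lemma emNN_id : emNN (K := K) N M (𝟙 N) = pSq N M := rfl

private lemma emMM_id : emMM (K := K) N M (𝟙 M) = 1 - pSq N M := by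
  rw [one_sub_pSq]
  rfl

end CornerLemmas

end HermCatAux

namespace HermCat

/-- **Statement 18.** Let `L/K` be a field extension and `C` an additive `K`-category with
finite-dimensional Hom-spaces.  Then two objects of `C` are isomorphic iff their scalar
extensions are isomorphic in `C ⊗_K L`. -/
theorem iso_iff_iso_of_extension (K : Type ku) [Field K] (L : Type rv) [Field L]
    [Algebra K L] {C : Type u} [Category.{v} C] [Preadditive C] [CategoryTheory.Linear K C]
    (hfin : ∀ X Y : C, FiniteDimensional K (X ⟶ Y)) (N M : C) :
    Nonempty (N ≅ M) ↔
      Nonempty ((extFunctor K L).obj N ≅ (extFunctor K L (C := C)).obj M) := by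
  constructor
  · rintro ⟨e⟩
    exact ⟨(extFunctor K L).mapIso e⟩
  · rintro ⟨e⟩
    haveI := hfin N N
    haveI := hfin N M
    haveI := hfin M N
    haveI := hfin M M
    classical
    -- Extract the composition identities of the isomorphism.
    have hαβ : tensorBil K L (compBil K N M N) e.hom e.inv = (𝟙 N) ⊗ₜ[K] (1 : L) :=
      e.hom_inv_id
    have hβα : tensorBil K L (compBil K M N M) e.inv e.hom = (𝟙 M) ⊗ₜ[K] (1 : L) :=
      e.inv_hom_id
    set p : HermCatAux.SqRing N M := HermCatAux.pSq N M with hpdef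
    have hp : p * p = p := HermCatAux.pSq_idem N M
    set x := HermCatAux.jEmb N M L (HermCatAux.emNM (K := K) N M) e.hom with hx
    set y := HermCatAux.jEmb N M L (HermCatAux.emMN (K := K) N M) e.inv with hy
    have hxy : x * y = (1 : L) ⊗ₜ[K] p := by
      rw [hx, hy, ← HermCatAux.jEmb_tensorBil N M L _ _ (HermCatAux.emNN (K := K) N M)
        (compBil K N M N)
        (fun u v => by
          show HermCatAux.emNN (K := K) N M (u ≫ v) = _
          rw [HermCatAux.emNM_mul_emMN]) e.hom e.inv]
      rw [hαβ, HermCatAux.jEmb_tmul, HermCatAux.emNN_id]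
    have hyx : y * x = (1 : L) ⊗ₜ[K] (1 - p) := by
      rw [hx, hy, ← HermCatAux.jEmb_tensorBil N M L _ _ (HermCatAux.emMM (K := K) N M)
        (compBil K M N M)
        (fun u v => by
          show HermCatAux.emMM (K := K) N M (u ≫ v) = _
          rw [HermCatAux.emMN_mul_emNM]) e.inv e.hom]
      rw [hβα, HermCatAux.jEmb_tmul, HermCatAux.emMM_id]
    have hpx : ((1 : L) ⊗ₜ[K] p) * x = x :=
      HermCatAux.one_tmul_mul_jEmb N M L _ p
        (fun h => HermCatAux.emNM_corner_left N M h) e.hom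
    have hxq : x * ((1 : L) ⊗ₜ[K] (1 - p)) = x :=
      HermCatAux.jEmb_mul_one_tmul N M L _ (1 - p)
        (fun h => HermCatAux.emNM_corner_right N M h) e.hom
    have hqy : ((1 : L) ⊗ₜ[K] (1 - p)) * y = y :=
      HermCatAux.one_tmul_mul_jEmb N M L _ (1 - p)
        (fun h => HermCatAux.emMN_corner_left N M h) e.inv
    have hyp : y * ((1 : L) ⊗ₜ[K] p) = y :=
      HermCatAux.jEmb_mul_one_tmul N M L _ p
        (fun h => HermCatAux.emMN_corner_right N M h) e.inv
    -- assemble the conjugating unit over `L`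
    have hsub := HermCatAux.one_sub_one_tmul (K := K) (R := HermCatAux.SqRing N M) (J := L) p
    obtain ⟨u, hu⟩ := HermCatAux.unit_conj_of_corner (p := (1 : L) ⊗ₜ[K] p) (x := x) (y := y)
      hpx (by rw [hsub]; exact hxq) (by rw [hsub]; exact hqy) hyp hxy
      (by rw [hsub]; exact hyx)
    rw [hsub] at hu
    -- descend to `K`
    obtain ⟨v, hv⟩ := HermCatAux.exists_conj_unit hp u hu
    -- extract the isomorphism from the conjugating unit
    set vi := ((v⁻¹ : (HermCatAux.SqRing N M)ˣ) : HermCatAux.SqRing N M) with hvi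
    have h1 : p * vi = vi * (1 - p) := by
      calc p * vi = vi * (((v : HermCatAux.SqRing N M) * p) * vi) := by
            rw [← mul_assoc, ← mul_assoc, hvi, Units.inv_mul, one_mul]
        _ = vi * (((1 - p) * (v : HermCatAux.SqRing N M)) * vi) := by rw [hv]
        _ = vi * (1 - p) := by
            rw [mul_assoc (1 - p), hvi, Units.mul_inv, mul_one]
    have hq2 : (1 - p) * (1 - p) = 1 - p := HermCatAux.one_sub_mul_self hp
    have hxy0 : (p * vi) * ((1 - p) * (v : HermCatAux.SqRing N M)) = p := by
      calc (p * vi) * ((1 - p) * (v : HermCatAux.SqRing N M))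
          = vi * (1 - p) * ((1 - p) * (v : HermCatAux.SqRing N M)) := by rw [h1]
        _ = vi * (((1 - p) * (1 - p)) * (v : HermCatAux.SqRing N M)) := by
            rw [mul_assoc, ← mul_assoc (1 - p)]
        _ = vi * ((1 - p) * (v : HermCatAux.SqRing N M)) := by rw [hq2]
        _ = vi * ((v : HermCatAux.SqRing N M) * p) := by rw [← hv]
        _ = p := by rw [← mul_assoc, hvi, Units.inv_mul, one_mul]
    have hyx0 : ((1 - p) * (v : HermCatAux.SqRing N M)) * (p * vi) = 1 - p := by
      calc ((1 - p) * (v : HermCatAux.SqRing N M)) * (p * vi)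
          = ((v : HermCatAux.SqRing N M) * p) * (p * vi) := by rw [← hv]
        _ = (v : HermCatAux.SqRing N M) * ((p * p) * vi) := by
            rw [mul_assoc, ← mul_assoc p]
        _ = (v : HermCatAux.SqRing N M) * (p * vi) := by rw [hp]
        _ = (v : HermCatAux.SqRing N M) * (vi * (1 - p)) := by rw [h1]
        _ = 1 - p := by rw [← mul_assoc, hvi, Units.mul_inv, one_mul]
    rw [HermCatAux.pSq_mul, HermCatAux.qSq_mul] at hxy0 hyx0
    rw [HermCatAux.sq_mul_def] at hxy0 hyx0
    have c1 := congrArg (fun z : HermCatAux.SqRing N M => z.1.1) hxy0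
    have c2 := congrArg (fun z : HermCatAux.SqRing N M => z.2.2) hyx0
    simp only [HermCatAux.sqMul, hpdef, HermCatAux.pSq, HermCatAux.one_sub_pSq,
      HermCatAux.sq_one_def, Prod.mk_sub_mk, sub_zero,
      Limits.comp_zero, Limits.zero_comp, zero_add, add_zero] at c1 c2
    exact ⟨⟨vi.1.2, (v : HermCatAux.SqRing N M).2.1, c1, c2⟩⟩


end HermCat
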